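/- arXiv:1612.08559 — 5 statements merged into one kernel-verified Lean document; each statement's English description precedes it below -/
import Mathlib

section
/- Suppose H is a hypergraph all of whose edges have at most k vertices. Let X = e(H_p), μ = E X, and for r > 0 let X_r = max{e(G) : G ⊆ H_p and Δ₁(G) ≤ r}. Then for all p ∈ [0,1] and all r, t > 0: Pr(X_r ≥ μ + t/2) ≤ exp(−φ(t/μ)·μ/(4kr)) ≤ exp(−min{t, t²/μ}/(12kr)). -/
open MeasureTheory Real
open scoped ENNReal Classical

noncomputable section

namespace UT

/-- `φ(x) = (1+x)·log(1+x) − x`. -/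
def phi (x : ℝ) : ℝ := (1 + x) * Real.log (1 + x) - x

/-- Bernoulli measure on `Bool` with success probability `p` (intended for `p ∈ [0,1]`). -/
def bern (p : ℝ) : Measure Bool :=
  (PMF.bernoulli (min (Real.toNNReal p) 1) (min_le_right _ _)).toMeasure

instance (p : ℝ) : IsProbabilityMeasure (bern p) := by
  unfold bern; infer_instance

/-- The Bernoulli(`p`) product measure on subsets of `V` (encoded as `V → Bool`):
each vertex is kept independently with probability `p`. -/
def perc (V : Type) [Fintype V] (p : ℝ) : Measure (V → Bool) :=
  Measure.pi fun _ => bern p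

/-- The edge set of the induced random subhypergraph `H_p`, for the outcome `ω`. -/
def HpEdges {V : Type} (H : Finset (Finset V)) (ω : V → Bool) : Finset (Finset V) :=
  H.filter fun e => ∀ v ∈ e, ω v = true

/-- `X = e(H_p)`, the number of induced edges, as a real-valued random variable. -/
def XE {V : Type} (H : Finset (Finset V)) (ω : V → Bool) : ℝ :=
  ((HpEdges H ω).card : ℝ)

/-- `μ = E e(H_p)`. -/
def mu {V : Type} [Fintype V] (H : Finset (Finset V)) (p : ℝ) : ℝ :=
  ∫ ω, XE H ω ∂(perc V p)

/-- `Pr(e(H_p) ≥ c)`. -/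
def pr {V : Type} [Fintype V] (H : Finset (Finset V)) (p c : ℝ) : ℝ :=
  (perc V p {ω | c ≤ XE H ω}).toReal

/-- `Var e(H_p)`. -/
def hvar {V : Type} [Fintype V] (H : Finset (Finset V)) (p : ℝ) : ℝ :=
  ProbabilityTheory.variance (XE H) (perc V p)

/-- `Δ_j(H)`: the maximum, over `j`-element vertex sets `S`, of the number of edges
of `H` containing `S`. -/
def maxDegj {V : Type} [Fintype V] (H : Finset (Finset V)) (j : ℕ) : ℕ :=
  (Finset.univ.filter fun S : Finset V => S.card = j).sup fun S =>
    (H.filter fun f => S ⊆ f).card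

/-- Property `𝔛(H, D, x)`: there is `W ⊆ V(H)` with `|W| ≤ D·max{√x, 1}` and
`e(H[W]) ≥ x`. -/
def propX {V : Type} [Fintype V] (H : Finset (Finset V)) (D x : ℝ) : Prop :=
  ∃ W : Finset V, (W.card : ℝ) ≤ D * max (Real.sqrt x) 1 ∧
    x ≤ ((H.filter fun e => e ⊆ W).card : ℝ)

/-- The degree `|Γ_v(G)|` of vertex `v` in the hypergraph `G`. -/
def deg {V : Type} (G : Finset (Finset V)) (v : V) : ℕ :=
  (G.filter fun f => v ∈ f).card

/-- `Δ₁(G)`, the maximum vertex degree. -/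
def maxDeg {V : Type} [Fintype V] (G : Finset (Finset V)) : ℕ :=
  Finset.univ.sup (deg G)

/-- The vertex set of a star: the union of its edges. -/
def starVtx {V : Type} (W : Finset (Finset V)) : Finset V := W.sup id

/-- `M_r(G)`: the maximum size of a collection of `r`-stars in `G` whose vertex sets
are pairwise disjoint. An `r`-star is a pair `S = (v, W)` with `W ⊆ Γ_v(G)` and
`|W| = ⌈r⌉`. -/
def Mr {V : Type} (G : Finset (Finset V)) (r : ℝ) : ℕ :=
  sSup { m : ℕ | ∃ M : Finset (V × Finset (Finset V)),
    (∀ S ∈ M, S.2 ⊆ G.filter (fun f => S.1 ∈ f) ∧ S.2.card = Nat.ceil r) ∧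
    (∀ S ∈ M, ∀ T ∈ M, S ≠ T → Disjoint (starVtx S.2) (starVtx T.2)) ∧
    m = M.card }

/-- `X_r`: the maximum number of edges of a subhypergraph `G ⊆ H_p` with maximum
degree `Δ₁(G) ≤ r`. -/
def Xr {V : Type} (H : Finset (Finset V)) (r : ℝ) (ω : V → Bool) : ℝ :=
  sSup { z : ℝ | ∃ G : Finset (Finset V), G ⊆ HpEdges H ω ∧
    (∀ v : V, (deg G v : ℝ) ≤ r) ∧ z = (G.card : ℝ) }

/-- `s = log(e/p^γ)`. -/
def sP (p γ : ℝ) : ℝ := Real.log (Real.exp 1 / p ^ γ)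

/-- The event `𝒯(β, γ, r, t)` (with `r_j = 2^j·r` and `s = log(e/p^γ)`). -/
def eventT {V : Type} (H : Finset (Finset V)) (p β γ r t : ℝ) (ω : V → Bool) : Prop :=
  (∀ j : ℕ, (2:ℝ) ^ j * r < Real.sqrt t / sP p γ →
    ((Mr (HpEdges H ω) ((2:ℝ) ^ j * r) : ℝ) < β * Real.sqrt t * sP p γ / ((2:ℝ) ^ j * r))) ∧
  (∀ j : ℕ, Real.sqrt t / sP p γ ≤ (2:ℝ) ^ j * r →
    ((Mr (HpEdges H ω) ((2:ℝ) ^ j * r) : ℝ) < β * Real.sqrt t / ((2:ℝ) ^ j * r)))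

/-- `s` is an arithmetic progression of length `k` in `{0, 1, …, n−1}`. -/
def isAP (k n : ℕ) (s : Finset (Fin n)) : Prop :=
  ∃ a d : ℕ, 0 < d ∧
    s.image (fun x : Fin n => (x : ℕ)) = (Finset.range k).image fun i => a + i * d

/-- The `k`-uniform hypergraph whose edges are the arithmetic progressions of
length `k` in `{0, 1, …, n−1}` (a copy of `[n]`). -/
def apH (k n : ℕ) : Finset (Finset (Fin n)) :=
  Finset.univ.filter (isAP k n)

/-- `Z_C`: the maximum of `Σ_{α∈J} Y_α` over all `J ⊆ I` satisfying
`max_{β∈J} Σ_{α∈J, α∼β} Y_α ≤ C`. -/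
def ZC {Ω I : Type} [Fintype I] (Y : I → Ω → ℝ) (rel : I → I → Prop) (C : ℝ) (ω : Ω) : ℝ :=
  sSup { z : ℝ | ∃ J : Finset I,
    (∀ β ∈ J, ∑ α ∈ J.filter (fun α => rel α β), Y α ω ≤ C) ∧
    z = ∑ α ∈ J, Y α ω }

/-- `Z`: the maximum number of events occurring with pairwise disjoint certificates. -/
def Zdisj {M : ℕ} {Ω : Fin M → Type} {I : Type} [Fintype I]
    (E : I → Set (∀ i, Ω i)) (ω : ∀ i, Ω i) : ℕ :=
  sSup { m : ℕ | ∃ J : Finset I, ∃ K : I → Finset (Fin M),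
    (∀ α ∈ J, ∀ β ∈ J, α ≠ β → Disjoint (K α) (K β)) ∧
    (∀ α ∈ J, ∀ ω' : ∀ i, Ω i, (∀ i ∈ K α, ω' i = ω i) → ω' ∈ E α) ∧
    m = J.card }


/-! ### Auxiliary lemmas for the proof of Lemma 3.1 -/

instance (V : Type) [Fintype V] (p : ℝ) : IsProbabilityMeasure (perc V p) := by
  unfold perc; infer_instance

lemma hasDerivAt_phi {x : ℝ} (hx : -1 < x) : HasDerivAt phi (Real.log (1 + x)) x := by
  have h1 : (0:ℝ) < 1 + x := by linarith
  have hlog : HasDerivAt (fun y : ℝ => Real.log (1 + y)) (1 / (1 + x)) x := by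
    simpa using (((hasDerivAt_id x).const_add 1).log h1.ne')
  have := (((hasDerivAt_id x).const_add 1).mul hlog).sub (hasDerivAt_id x)
  refine this.congr_deriv ?_
  rw [id_eq, mul_one_div_cancel h1.ne']; ring

/-- `φ(x) ≤ 4 φ(x/2)` for `x ≥ 0`. -/
lemma phi_le_four_phi_half {x : ℝ} (hx : 0 ≤ x) : phi x ≤ 4 * phi (x / 2) := by
  set g : ℝ → ℝ := fun y => 4 * phi (y / 2) - phi y with hg
  have hder : ∀ y : ℝ, 0 ≤ y → HasDerivAt g (2 * Real.log (1 + y/2) - Real.log (1 + y)) y := by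
    intro y hy
    have h1 : HasDerivAt (fun z : ℝ => phi (z / 2)) (Real.log (1 + y/2) * (1/2)) y :=
      by have hφ := hasDerivAt_phi (by linarith : (-1:ℝ) < y/2); exact hφ.comp y ((hasDerivAt_id' y).div_const 2)
    have h2 := ((h1.const_mul 4).sub (hasDerivAt_phi (by linarith : (-1:ℝ) < y)))
    refine h2.congr_deriv ?_; ring
  have hmono : MonotoneOn g (Set.Ici (0:ℝ)) := by
    apply monotoneOn_of_deriv_nonneg (convex_Ici 0)
    · intro y hy
      exact (hder y hy).continuousAt.continuousWithinAt
    · intro y hy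
      rw [interior_Ici] at hy
      exact (hder y hy.le).differentiableAt.differentiableWithinAt
    · intro y hy
      rw [interior_Ici] at hy
      have hy' : 0 < y := hy
      rw [(hder y hy.le).deriv]
      have h3 : Real.log (1 + y) ≤ 2 * Real.log (1 + y/2) := by
        have : Real.log (1 + y) ≤ Real.log ((1 + y/2)^2) := by
          apply Real.log_le_log (by linarith)
          nlinarith
        rwa [Real.log_pow, Nat.cast_ofNat] at this
      linarith
  have h0 : g 0 = 0 := by simp [hg, phi]
  have := hmono (Set.self_mem_Ici) (Set.mem_Ici.2 hx) hx
  rw [h0] at this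
  simp only [hg] at this
  linarith

/-- `log(1+x) ≥ 2x/(2+x)` for `x ≥ 0`. -/
lemma two_x_le_log {x : ℝ} (hx : 0 ≤ x) : 2 * x / (2 + x) ≤ Real.log (1 + x) := by
  set g : ℝ → ℝ := fun y => Real.log (1 + y) - 2 * y / (2 + y) with hg
  have hder : ∀ y : ℝ, 0 ≤ y → HasDerivAt g (1 / (1 + y) - 4 / (2 + y)^2) y := by
    intro y hy
    have h1 : HasDerivAt (fun z : ℝ => Real.log (1 + z)) (1 / (1 + y)) y := by
      simpa using (((hasDerivAt_id y).const_add 1).log (by linarith : (1:ℝ) + y ≠ 0))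
    have h2 : HasDerivAt (fun z : ℝ => 2 * z / (2 + z)) (4 / (2 + y)^2) y := by
      have := (((hasDerivAt_id y).const_mul 2).div ((hasDerivAt_id y).const_add 2)
        (by linarith : (2:ℝ) + y ≠ 0))
      refine this.congr_deriv ?_
      rw [id_eq]
      ring
    exact h1.sub h2
  have hmono : MonotoneOn g (Set.Ici (0:ℝ)) := by
    apply monotoneOn_of_deriv_nonneg (convex_Ici 0)
    · intro y hy; exact (hder y hy).continuousAt.continuousWithinAt
    · intro y hy
      rw [interior_Ici] at hy
      exact (hder y hy.le).differentiableAt.differentiableWithinAt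
    · intro y hy
      rw [interior_Ici] at hy
      have hy' : 0 < y := hy
      rw [(hder y hy.le).deriv]
      rw [sub_nonneg, div_le_div_iff₀ (pow_pos (by linarith : (0:ℝ) < 2 + y) 2) (by linarith)]
      nlinarith
  have h0 : g 0 = 0 := by simp [hg]
  have := hmono (Set.self_mem_Ici) (Set.mem_Ici.2 hx) hx
  rw [h0] at this
  simp only [hg] at this
  linarith

lemma phi_lower {x : ℝ} (hx : 0 ≤ x) : x^2 / (2 + x) ≤ phi x := by
  have h := two_x_le_log hx
  have h2 : (0:ℝ) < 2 + x := by linarith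
  have : (1 + x) * (2 * x / (2 + x)) ≤ (1 + x) * Real.log (1 + x) :=
    mul_le_mul_of_nonneg_left h (by linarith)
  have he : (1 + x) * (2 * x / (2 + x)) - x = x^2 / (2 + x) := by
    field_simp; ring
  simp only [phi]; linarith [this, he.ge]

lemma phi_nonneg {x : ℝ} (hx : 0 ≤ x) : 0 ≤ phi x := le_trans (by positivity) (phi_lower hx)

/-- one telescoping step -/
lemma tel_step {μ C u : ℝ} (hμ : 0 < μ) (hC : 0 < C) (h : μ ≤ u - C) :
    (u * Real.log (u/μ) - u + μ) - ((u - C) * Real.log ((u - C)/μ) - (u - C) + μ)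
      ≤ C * Real.log (u/μ) := by
  have h1 : 0 < u - C := lt_of_lt_of_le hμ h
  have hu : 0 < u := by linarith
  have key : (u - C) * (Real.log u - Real.log (u - C)) ≤ C := by
    have h2 := Real.log_le_sub_one_of_pos (div_pos hu h1)
    rw [Real.log_div hu.ne' h1.ne'] at h2
    have h3 : (u - C) * (Real.log u - Real.log (u - C)) ≤ (u - C) * (u / (u - C) - 1) :=
      mul_le_mul_of_nonneg_left h2 h1.le
    have h4 : (u - C) * (u / (u - C) - 1) = C := by field_simp; ring
    linarith
  rw [Real.log_div hu.ne' hμ.ne', Real.log_div h1.ne' hμ.ne']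
  linear_combination key

/-- sub-lemma A -/
lemma small_phi_bound {μ C δ : ℝ} (hμ : 0 < μ) (hδ : 0 < δ) (hδC : δ * μ ≤ C) :
    μ * phi δ ≤ C * Real.log (1 + δ) := by
  have h1 : (0:ℝ) < 1 + δ := by linarith
  have hlog0 : 0 ≤ Real.log (1 + δ) := Real.log_nonneg (by linarith)
  have hlogδ : Real.log (1 + δ) ≤ δ := by
    have := Real.log_le_sub_one_of_pos h1; linarith
  have h2 : phi δ ≤ δ * Real.log (1 + δ) := by
    simp only [phi]; nlinarith
  calc μ * phi δ ≤ μ * (δ * Real.log (1 + δ)) := mul_le_mul_of_nonneg_left h2 hμ.le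
    _ = (δ * μ) * Real.log (1 + δ) := by ring
    _ ≤ C * Real.log (1 + δ) := mul_le_mul_of_nonneg_right hδC hlog0

/-- The main product bound. -/
lemma prod_bound (μ C t : ℝ) (hμ : 0 < μ) (hC : 0 < C) (ht : 0 < t) :
    ∏ i ∈ Finset.range (⌈t/(2*C)⌉₊ - 1 + 1), (μ / (μ + t/2 - i*C))
      ≤ Real.exp (-(phi (t/μ) * μ / (4*C))) := by
  set L : ℕ := ⌈t/(2*C)⌉₊ - 1 with hL
  have hN1 : 1 ≤ ⌈t/(2*C)⌉₊ := Nat.one_le_ceil_iff.2 (by positivity)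
  have hLcast : (L : ℝ) = (⌈t/(2*C)⌉₊ : ℝ) - 1 := by
    rw [hL]; push_cast [hN1]; ring
  have hL1 : (L:ℝ) * C < t/2 := by
    have := Nat.ceil_lt_add_one (show (0:ℝ) ≤ t/(2*C) by positivity)
    rw [hLcast] at *
    have h2 : ((⌈t/(2*C)⌉₊ : ℝ) - 1) < t/(2*C) := by linarith
    calc ((⌈t/(2*C)⌉₊ : ℝ) - 1) * C < t/(2*C) * C := by
          exact mul_lt_mul_of_pos_right h2 hC
      _ = t/2 := by field_simp
  have hL2 : t/2 ≤ ((L:ℝ) + 1) * C := by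
    have := Nat.le_ceil (t/(2*C))
    rw [hLcast]
    have h2 : t/(2*C) ≤ (⌈t/(2*C)⌉₊ : ℝ) := this
    calc t/2 = t/(2*C) * C := by field_simp
      _ ≤ (⌈t/(2*C)⌉₊ : ℝ) * C := mul_le_mul_of_nonneg_right h2 hC.le
      _ = ((⌈t/(2*C)⌉₊ : ℝ) - 1 + 1) * C := by ring
  -- s_i and positivity
  set s : ℕ → ℝ := fun i => μ + t/2 - i*C with hs
  have hsL : μ < s L := by simp only [hs]; linarith
  have hsmono : ∀ i ≤ L, s L ≤ s i := by
    intro i hi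
    simp only [hs]
    have : (i:ℝ) ≤ (L:ℝ) := by exact_mod_cast hi
    nlinarith
  have hspos : ∀ i ≤ L, 0 < s i := fun i hi => lt_trans hμ (lt_of_lt_of_le hsL (hsmono i hi))
  set δ : ℝ := (t/2 - L*C)/μ with hδdef
  have hδ : 0 < δ := by apply div_pos; linarith; exact hμ
  have hδC : δ * μ ≤ C := by
    rw [hδdef]; rw [div_mul_cancel₀ _ hμ.ne']; linarith
  -- telescoping
  set F : ℝ → ℝ := fun u => u * Real.log (u/μ) - u + μ with hF
  have tel : ∀ n : ℕ, n ≤ L →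
      F (s 0) - F (s n) ≤ ∑ i ∈ Finset.range n, C * Real.log (s i / μ) := by
    intro n hn
    induction n with
    | zero => simp
    | succ m ih =>
      have hm : m ≤ L := le_trans (Nat.le_succ m) hn
      have ihm := ih hm
      have hstep : F (s m) - F (s (m+1)) ≤ C * Real.log (s m / μ) := by
        have hsm1 : μ ≤ s m - C := by
          have : s (m+1) = s m - C := by simp only [hs]; push_cast; ring
          rw [← this]
          exact le_trans (le_of_lt hsL) (hsmono (m+1) hn)
        have := tel_step hμ hC hsm1
        have heq : s (m+1) = s m - C := by simp only [hs]; push_cast; ring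
        rw [heq]
        exact this
      rw [Finset.sum_range_succ]
      linarith
  have telL := tel L le_rfl
  -- identify F values with phi
  have hFs0 : F (s 0) = μ * phi (t/μ / 2) := by
    simp only [hF, hs, phi]
    have h1 : (μ + t/2)/μ = 1 + (t/μ)/2 := by rw [div_eq_iff hμ.ne']; field_simp
    push_cast
    rw [show μ + t / 2 - 0 * C = μ + t/2 by ring, h1]
    have h2 : μ * (1 + t/μ/2) = μ + t/2 := by field_simp
    have h3 : μ * (t/μ/2) = t/2 := by field_simp
    linear_combination (-Real.log (1 + t/μ/2)) * h2 + h3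
  have hFsL : F (s L) = μ * phi δ := by
    simp only [hF, hs, phi]
    have h1 : (μ + t/2 - L*C)/μ = 1 + δ := by rw [hδdef]; field_simp; ring
    rw [h1]
    have h2 : μ * (1 + δ) = μ + t/2 - L*C := by rw [hδdef]; field_simp; ring
    have h3 : μ * δ = t/2 - L*C := by rw [hδdef]; field_simp
    linear_combination (-Real.log (1 + δ)) * h2 + h3
  have hsLμ : s L / μ = 1 + δ := by
    simp only [hs]; rw [hδdef]; field_simp; ring
  -- overall sum bound
  have hsum : phi (t/μ) * μ / (4*C) ≤ ∑ i ∈ Finset.range (L+1), Real.log (s i / μ) := by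
    rw [Finset.sum_range_succ]
    have h1 : (F (s 0) - F (s L))/C ≤ ∑ i ∈ Finset.range L, Real.log (s i / μ) := by
      rw [div_le_iff₀ hC]
      calc F (s 0) - F (s L) ≤ ∑ i ∈ Finset.range L, C * Real.log (s i / μ) := telL
        _ = (∑ i ∈ Finset.range L, Real.log (s i / μ)) * C := by
            rw [Finset.sum_mul]; exact Finset.sum_congr rfl (fun i _ => by ring)
    have h2 : μ * phi δ ≤ C * Real.log (1 + δ) := small_phi_bound hμ hδ hδC
    have h3 : phi (t/μ) ≤ 4 * phi (t/μ / 2) := phi_le_four_phi_half (by positivity)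
    rw [hsLμ]
    have h4 : phi (t/μ) * μ / (4*C) ≤ μ * phi (t/μ/2) / C := by
      have h3' := mul_le_mul_of_nonneg_right h3 (le_of_lt (mul_pos hμ hC))
      rw [div_le_div_iff₀ (by positivity) hC]
      nlinarith [h3']
    have h5 : (F (s 0) - F (s L))/C = μ * phi (t/μ/2)/C - μ * phi δ / C := by
      rw [hFs0, hFsL]; ring
    have h6 : μ * phi δ / C ≤ Real.log (1 + δ) := by
      rw [div_le_iff₀ hC]; linarith [h2]
    linarith
  -- convert product to exp
  have hprod : ∏ i ∈ Finset.range (L+1), (μ / s i)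
      = Real.exp (-(∑ i ∈ Finset.range (L+1), Real.log (s i / μ))) := by
    rw [← Finset.sum_neg_distrib, Real.exp_sum]
    apply Finset.prod_congr rfl
    intro i hi
    have hi' : i ≤ L := Nat.lt_succ_iff.1 (Finset.mem_range.1 hi)
    rw [← Real.log_inv, Real.exp_log]
    · rw [inv_div]
    · exact inv_pos.2 (div_pos (hspos i hi') hμ)
  calc ∏ i ∈ Finset.range (L+1), (μ / (μ + t/2 - i*C))
      = ∏ i ∈ Finset.range (L+1), (μ / s i) := rfl
    _ = Real.exp (-(∑ i ∈ Finset.range (L+1), Real.log (s i / μ))) := hprod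
    _ ≤ Real.exp (-(phi (t/μ) * μ / (4*C))) := by
        apply Real.exp_le_exp.2; linarith

lemma min_le_three_phi {μ t : ℝ} (hμ : 0 < μ) (ht : 0 < t) :
    min t (t^2/μ) ≤ 3 * phi (t/μ) * μ := by
  set x := t/μ with hxdef
  have hx : 0 < x := div_pos ht hμ
  have h2x : (0:ℝ) < 2 + x := by linarith
  have hp' : x^2 ≤ phi x * (2 + x) := (div_le_iff₀ h2x).1 (phi_lower hx.le)
  have hphi0 : 0 ≤ phi x := phi_nonneg hx.le
  have hxt : x * μ = t := by rw [hxdef]; field_simp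
  rcases le_total x 1 with hc | hc
  · refine le_trans (min_le_right _ _) ?_
    have ht2 : t^2/μ = x^2*μ := by rw [← hxt]; field_simp
    rw [ht2]
    nlinarith [mul_le_mul_of_nonneg_right hp' hμ.le,
      mul_nonneg (mul_nonneg hphi0 (by linarith : (0:ℝ) ≤ 1 - x)) hμ.le]
  · refine le_trans (min_le_left _ _) ?_
    rw [← hxt]
    nlinarith [mul_le_mul_of_nonneg_right hp' hμ.le,
      mul_nonneg (mul_nonneg hphi0 (by linarith : (0:ℝ) ≤ x - 1)) hμ.le,
      mul_pos hx hμ]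

variable {V : Type} [Fintype V]

lemma measSet (S : Set (V → Bool)) : MeasurableSet S := S.toFinite.measurableSet

lemma integr (p : ℝ) (f : (V → Bool) → ℝ) : Integrable f (perc V p) :=
  Integrable.of_finite

lemma bern_true {p : ℝ} (hp1 : p ≤ 1) : bern p {true} = ENNReal.ofReal p := by
  unfold bern
  rw [PMF.toMeasure_apply_singleton _ _ (measurableSet_singleton _)]
  rw [PMF.bernoulli_apply]
  simp [min_eq_left (ENNReal.ofReal_le_one.2 hp1)]
  exact min_eq_left (ENNReal.ofReal_le_one.2 hp1)

/-- factorization of a cylinder condition and an event depending only on coordinates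
outside `α`. -/
lemma cylinder_event {p : ℝ} (hp1 : p ≤ 1) (α : Finset V) (B : Set (V → Bool))
    (hB : ∀ ω ω' : V → Bool, (∀ v, v ∉ α → ω v = ω' v) → ω ∈ B → ω' ∈ B) :
    perc V p ({ω | ∀ v ∈ α, ω v = true} ∩ B)
      = ENNReal.ofReal p ^ α.card * perc V p B := by
  classical
  have hmp := measurePreserving_piEquivPiSubtypeProd (fun _ : V => bern p) (· ∈ α)
  set e := MeasurableEquiv.piEquivPiSubtypeProd (fun _ : V => Bool) (· ∈ α) with he
  set B' : Set ({v : V // ¬ v ∈ α} → Bool) :=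
    {g | ∃ ω ∈ B, ∀ v : {v : V // ¬ v ∈ α}, g v = ω v.1} with hB'
  have hmemB : ∀ ω : V → Bool, ω ∈ B ↔ (fun v : {v : V // ¬ v ∈ α} => ω v.1) ∈ B' := by
    intro ω
    constructor
    · intro h; exact ⟨ω, h, fun _ => rfl⟩
    · rintro ⟨ω', hω', hag⟩
      exact hB ω' ω (fun v hv => (hag ⟨v, hv⟩).symm) hω'
  have hset : {ω : V → Bool | ∀ v ∈ α, ω v = true} ∩ B
      = e ⁻¹' ((Set.univ.pi fun _ => ({true} : Set Bool)) ×ˢ B') := by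
    ext ω
    constructor
    · rintro ⟨h1, h2⟩
      refine Set.mem_preimage.2 (Set.mem_prod.2 ⟨Set.mem_pi.2 fun v _ => ?_, ?_⟩)
      · show ω v.1 ∈ ({true} : Set Bool)
        simp [h1 v.1 v.2]
      · exact (hmemB ω).1 h2
    · intro h
      obtain ⟨h1, h2⟩ := Set.mem_prod.1 (Set.mem_preimage.1 h)
      refine ⟨fun v hv => ?_, (hmemB ω).2 h2⟩
      have := Set.mem_pi.1 h1 ⟨v, hv⟩ trivial
      exact this
  have hsetB : B = e ⁻¹' (Set.univ ×ˢ B') := by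
    ext ω
    constructor
    · intro h
      exact Set.mem_preimage.2 (Set.mem_prod.2 ⟨trivial, (hmemB ω).1 h⟩)
    · intro h
      exact (hmemB ω).2 (Set.mem_prod.1 (Set.mem_preimage.1 h)).2
  have hM1 : MeasurableSet ((Set.univ.pi fun _ : {v : V // v ∈ α} => ({true} : Set Bool)) ×ˢ B') :=
    (Set.toFinite _).measurableSet
  have hM2 : MeasurableSet ((Set.univ : Set ({v : V // v ∈ α} → Bool)) ×ˢ B') :=
    (Set.toFinite _).measurableSet
  rw [hset, hsetB]
  show (Measure.pi fun _ => bern p) _ = _ * (Measure.pi fun _ => bern p) _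
  rw [he]
  rw [hmp.measure_preimage hM1.nullMeasurableSet, hmp.measure_preimage hM2.nullMeasurableSet]
  rw [Measure.prod_prod, Measure.prod_prod, measure_univ, one_mul]
  congr 1
  have hpi := Measure.pi_pi (fun _ : {x : V // x ∈ α} => bern p)
    (fun _ => ({true} : Set Bool))
  simp only [bern_true hp1, Finset.prod_const, Fintype.card_coe] at hpi
  convert hpi using 2
  · congr!
  · rw [← Fintype.card_coe α]
    congr!

lemma cyl {p : ℝ} (hp1 : p ≤ 1) (α : Finset V) :
    perc V p {ω | ∀ v ∈ α, ω v = true} = ENNReal.ofReal p ^ α.card := by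
  have := cylinder_event hp1 α Set.univ (fun _ _ _ _ => trivial)
  simpa using this

lemma integral_cyl_indicator {p : ℝ} (hp0 : 0 ≤ p) (hp1 : p ≤ 1) (α : Finset V) :
    ∫ ω, (if ∀ v ∈ α, ω v = true then (1:ℝ) else 0) ∂(perc V p) = p ^ α.card := by
  have h1 : (fun ω : V → Bool => (if ∀ v ∈ α, ω v = true then (1:ℝ) else 0))
      = fun ω => Set.indicator {ω : V → Bool | ∀ v ∈ α, ω v = true} (fun _ => (1:ℝ)) ω := by
    funext ω
    rw [Set.indicator_apply]
    congr 1
  rw [h1, integral_indicator_const _ (measSet _), measureReal_def, cyl hp1 α]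
  rw [smul_eq_mul, mul_one, ENNReal.toReal_pow, ENNReal.toReal_ofReal hp0]

lemma mu_eq {p : ℝ} (hp0 : 0 ≤ p) (hp1 : p ≤ 1) (H : Finset (Finset V)) :
    mu H p = ∑ α ∈ H, p ^ α.card := by
  unfold mu
  have hXE : ∀ ω : V → Bool, XE H ω = ∑ α ∈ H, (if ∀ v ∈ α, ω v = true then (1:ℝ) else 0) := by
    intro ω
    unfold XE HpEdges
    rw [Finset.card_filter]
    push_cast
    rfl
  rw [MeasureTheory.integral_congr_ae (Filter.Eventually.of_forall hXE)]
  rw [integral_finset_sum _ (fun α _ => integr p _)]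
  exact Finset.sum_congr rfl fun α _ => integral_cyl_indicator hp0 hp1 α

lemma mu_nonneg {p : ℝ} (hp0 : 0 ≤ p) (hp1 : p ≤ 1) (H : Finset (Finset V)) : 0 ≤ mu H p := by
  rw [mu_eq hp0 hp1]
  exact Finset.sum_nonneg fun α _ => pow_nonneg hp0 _

lemma mu_mono {p : ℝ} (hp0 : 0 ≤ p) (hp1 : p ≤ 1) {H H' : Finset (Finset V)} (h : H' ⊆ H) :
    mu H' p ≤ mu H p := by
  rw [mu_eq hp0 hp1, mu_eq hp0 hp1]
  exact Finset.sum_le_sum_of_subset_of_nonneg h (fun α _ _ => pow_nonneg hp0 _)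

/-! Xr structure -/

def fam (H : Finset (Finset V)) (r : ℝ) (ω : V → Bool) : Finset (Finset (Finset V)) :=
  (HpEdges H ω).powerset.filter fun G => ∀ v : V, (deg G v : ℝ) ≤ r

lemma empty_mem_fam {H : Finset (Finset V)} {r : ℝ} (hr : 0 ≤ r) (ω : V → Bool) :
    ∅ ∈ fam H r ω := by
  unfold fam
  rw [Finset.mem_filter, Finset.mem_powerset]
  refine ⟨Finset.empty_subset _, fun v => ?_⟩
  simp [deg, hr]

lemma fam_nonempty {H : Finset (Finset V)} {r : ℝ} (hr : 0 ≤ r) (ω : V → Bool) :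
    (fam H r ω).Nonempty := ⟨∅, empty_mem_fam hr ω⟩

lemma Xr_eq_max' {H : Finset (Finset V)} {r : ℝ} (hr : 0 ≤ r) (ω : V → Bool) :
    Xr H r ω = ((fam H r ω).image fun G => (G.card : ℝ)).max'
      ((fam_nonempty hr ω).image _) := by
  unfold Xr
  have hset : { z : ℝ | ∃ G : Finset (Finset V), G ⊆ HpEdges H ω ∧
      (∀ v : V, (deg G v : ℝ) ≤ r) ∧ z = (G.card : ℝ) }
      = ↑((fam H r ω).image fun G => (G.card : ℝ)) := by
    ext z
    simp only [Set.mem_setOf_eq, Finset.coe_image, Set.mem_image, Finset.mem_coe]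
    constructor
    · rintro ⟨G, h1, h2, h3⟩
      refine ⟨G, ?_, h3.symm⟩
      unfold fam
      rw [Finset.mem_filter, Finset.mem_powerset]
      exact ⟨h1, h2⟩
    · rintro ⟨G, hG, h3⟩
      unfold fam at hG
      rw [Finset.mem_filter, Finset.mem_powerset] at hG
      exact ⟨G, hG.1, hG.2, h3.symm⟩
  rw [hset]
  exact Finset.Nonempty.csSup_eq_max' _

lemma le_Xr {H : Finset (Finset V)} {r : ℝ} (hr : 0 ≤ r) (ω : V → Bool)
    {G : Finset (Finset V)} (hG : G ⊆ HpEdges H ω) (hdeg : ∀ v : V, (deg G v : ℝ) ≤ r) :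
    (G.card : ℝ) ≤ Xr H r ω := by
  rw [Xr_eq_max' hr ω]
  apply Finset.le_max'
  apply Finset.mem_image_of_mem
  unfold fam
  rw [Finset.mem_filter, Finset.mem_powerset]
  exact ⟨hG, hdeg⟩

lemma Xr_witness {H : Finset (Finset V)} {r : ℝ} (hr : 0 ≤ r) (ω : V → Bool) :
    ∃ G : Finset (Finset V), G ⊆ HpEdges H ω ∧ (∀ v : V, (deg G v : ℝ) ≤ r) ∧
      Xr H r ω = (G.card : ℝ) := by
  have := Finset.max'_mem ((fam H r ω).image fun G : Finset (Finset V) => (G.card : ℝ))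
    ((fam_nonempty (H := H) hr ω).image _)
  rw [← Xr_eq_max' hr ω] at this
  rw [Finset.mem_image] at this
  obtain ⟨G, hG, hcard⟩ := this
  unfold fam at hG
  rw [Finset.mem_filter, Finset.mem_powerset] at hG
  exact ⟨G, hG.1, hG.2, hcard.symm⟩

lemma Xr_nonneg {H : Finset (Finset V)} {r : ℝ} (hr : 0 ≤ r) (ω : V → Bool) :
    0 ≤ Xr H r ω := by
  have := le_Xr hr ω (Finset.empty_subset (HpEdges H ω))
    (fun v => by simp [deg, hr])
  simpa using this

lemma Xr_le_XE {H : Finset (Finset V)} {r : ℝ} (hr : 0 ≤ r) (ω : V → Bool) :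
    Xr H r ω ≤ XE H ω := by
  obtain ⟨G, hG, _, hcard⟩ := Xr_witness hr ω
  rw [hcard]
  exact_mod_cast Nat.cast_le.2 (Finset.card_le_card hG)

/-- classical indicator -/
def ind (P : Prop) : ℝ := if P then 1 else 0
lemma ind_nonneg (P : Prop) : 0 ≤ ind P := by unfold ind; split <;> norm_num
lemma ind_of (P : Prop) (h : P) : ind P = 1 := by unfold ind; split <;> tauto
lemma ind_indicator {X : Type*} (f : X → Prop) (x : X) :
    ind (f x) = Set.indicator {y | f y} (fun _ => (1:ℝ)) x := by
  unfold ind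
  rw [Set.indicator_apply]
  congr 1

/-- The hypergraph obtained by deleting all edges meeting `α`. -/
def del (H : Finset (Finset V)) (α : Finset V) : Finset (Finset V) :=
  H.filter fun e => ∀ v ∈ α, v ∉ e

lemma del_subset (H : Finset (Finset V)) (α : Finset V) : del H α ⊆ H := by
  unfold del; exact Finset.filter_subset _ _

omit [Fintype V] in
lemma HpEdges_subset (H : Finset (Finset V)) (ω : V → Bool) : HpEdges H ω ⊆ H := by
  intro e he
  unfold HpEdges at he
  exact (Finset.mem_filter.1 he).1

omit [Fintype V] in
lemma HpEdges_live {H : Finset (Finset V)} {ω : V → Bool} {α : Finset V}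
    (h : α ∈ HpEdges H ω) : ∀ v ∈ α, ω v = true := by
  unfold HpEdges at h
  exact (Finset.mem_filter.1 h).2

lemma Xr_del_inv (H : Finset (Finset V)) (α : Finset V) (r : ℝ) {ω ω' : V → Bool}
    (h : ∀ v, v ∉ α → ω v = ω' v) : Xr (del H α) r ω = Xr (del H α) r ω' := by
  have : HpEdges (del H α) ω = HpEdges (del H α) ω' := by
    unfold HpEdges
    ext e
    simp only [Finset.mem_filter]
    constructor <;> rintro ⟨he, hh⟩ <;> refine ⟨he, fun v hv => ?_⟩ <;>
      have hd := (Finset.mem_filter.1 he).2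
    · rw [← h v (fun hvα => hd v hvα hv)]; exact hh v hv
    · rw [h v (fun hvα => hd v hvα hv)]; exact hh v hv
  unfold Xr
  rw [this]

lemma meet_card {G : Finset (Finset V)} {α : Finset V} {r : ℝ} (hr : 0 ≤ r) {k : ℕ}
    (hdeg : ∀ v : V, (deg G v : ℝ) ≤ r) (hαk : α.card ≤ k) :
    ((G.filter fun e => ¬ ∀ v ∈ α, v ∉ e).card : ℝ) ≤ (k : ℝ) * r := by
  classical
  have hsub : (G.filter fun e => ¬ ∀ v ∈ α, v ∉ e) ⊆ α.biUnion (fun v => G.filter (fun e => v ∈ e)) := by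
    intro e he
    rw [Finset.mem_filter] at he
    push_neg at he
    obtain ⟨v, hvα, hve⟩ := he.2
    rw [Finset.mem_biUnion]
    exact ⟨v, hvα, Finset.mem_filter.2 ⟨he.1, hve⟩⟩
  have h1 : (G.filter fun e => ¬ ∀ v ∈ α, v ∉ e).card ≤ ∑ v ∈ α, deg G v :=
    le_trans (Finset.card_le_card hsub) (Finset.card_biUnion_le)
  calc ((G.filter fun e => ¬ ∀ v ∈ α, v ∉ e).card : ℝ) ≤ ((∑ v ∈ α, deg G v : ℕ) : ℝ) := by
        exact_mod_cast h1
    _ = ∑ v ∈ α, ((deg G v : ℝ)) := by push_cast; rfl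
    _ ≤ ∑ v ∈ α, r := Finset.sum_le_sum (fun v _ => hdeg v)
    _ = (α.card : ℝ) * r := by rw [Finset.sum_const, nsmul_eq_mul]
    _ ≤ (k : ℝ) * r := by
        apply mul_le_mul_of_nonneg_right _ hr
        exact_mod_cast hαk

/-- Pointwise deletion inequality. -/
lemma key_pointwise {H H' : Finset (Finset V)} (hH' : H' ⊆ H) {k : ℕ}
    (hH : ∀ e ∈ H, e.card ≤ k) {r : ℝ} (hr : 0 ≤ r) {s : ℝ} (hs : 0 ≤ s) (ω : V → Bool) :
    s * ind (s ≤ Xr H' r ω) ≤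
      ∑ α ∈ H', ind ((∀ v ∈ α, ω v = true) ∧ (s - k*r ≤ Xr (del H' α) r ω)) := by
  by_cases hev : s ≤ Xr H' r ω
  · rw [ind_of _ hev, mul_one]
    obtain ⟨G, hG, hdeg, hXr⟩ := Xr_witness (H := H') hr ω
    rw [hXr] at hev
    have hGH' : G ⊆ H' := hG.trans (HpEdges_subset _ _)
    have hterm : ∀ α ∈ G,
        ind ((∀ v ∈ α, ω v = true) ∧ (s - k*r ≤ Xr (del H' α) r ω)) = 1 := by
      intro α hα
      apply ind_of
      constructor
      · exact HpEdges_live (hG hα)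
      · -- Xr of deleted hypergraph is large
        set Gα := G.filter (fun e => ∀ v ∈ α, v ∉ e) with hGα
        have hsub : Gα ⊆ HpEdges (del H' α) ω := by
          intro e he
          rw [hGα, Finset.mem_filter] at he
          have heH := hG he.1
          simp only [HpEdges, del, Finset.mem_filter] at heH ⊢
          exact ⟨⟨heH.1, he.2⟩, heH.2⟩
        have hdegα : ∀ v : V, (deg Gα v : ℝ) ≤ r := by
          intro v
          refine le_trans ?_ (hdeg v)
          exact_mod_cast Nat.cast_le.2 (Finset.card_le_card
            (Finset.filter_subset_filter _ (Finset.filter_subset _ _)))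
        have hcard : (G.card : ℝ) - k*r ≤ (Gα.card : ℝ) := by
          have hsplit : Gα.card + (G.filter fun e => ¬ ∀ v ∈ α, v ∉ e).card = G.card :=
            Finset.card_filter_add_card_filter_not _
          have hmeet := meet_card hr hdeg (hH α (hH' (hGH' hα)))
          have : (Gα.card : ℝ) + ((G.filter fun e => ¬ ∀ v ∈ α, v ∉ e).card : ℝ) = (G.card : ℝ) := by
            exact_mod_cast hsplit
          linarith
        have := le_Xr (H := del H' α) hr ω hsub hdegα
        linarith
    calc s ≤ (G.card : ℝ) := hev
      _ = ∑ α ∈ G, (1:ℝ) := by rw [Finset.sum_const, nsmul_eq_mul, mul_one]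
      _ = ∑ α ∈ G, ind ((∀ v ∈ α, ω v = true) ∧ (s - k*r ≤ Xr (del H' α) r ω)) :=
          (Finset.sum_congr rfl hterm).symm
      _ ≤ _ := Finset.sum_le_sum_of_subset_of_nonneg hGH' (fun α _ _ => ind_nonneg _)
  · have : ind (s ≤ Xr H' r ω) = 0 := by unfold ind; split <;> tauto
    rw [this, mul_zero]
    exact Finset.sum_nonneg fun α _ => ind_nonneg _

/-- Integral of one deletion term. -/
lemma integral_del_term {p : ℝ} (hp0 : 0 ≤ p) (hp1 : p ≤ 1) (H' : Finset (Finset V))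
    (α : Finset V) (r c : ℝ) :
    ∫ ω, ind ((∀ v ∈ α, ω v = true) ∧ (c ≤ Xr (del H' α) r ω)) ∂(perc V p)
      = p ^ α.card * (perc V p {ω | c ≤ Xr (del H' α) r ω}).toReal := by
  set B : Set (V → Bool) := {ω | c ≤ Xr (del H' α) r ω} with hB
  have hBinv : ∀ ω ω' : V → Bool, (∀ v, v ∉ α → ω v = ω' v) → ω ∈ B → ω' ∈ B := by
    intro ω ω' hag hω
    rw [hB, Set.mem_setOf_eq] at hω ⊢
    rw [← Xr_del_inv H' α r hag]
    exact hω
  have h1 : (fun ω : V → Bool => ind ((∀ v ∈ α, ω v = true) ∧ (c ≤ Xr (del H' α) r ω)))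
      = fun ω => Set.indicator ({ω : V → Bool | ∀ v ∈ α, ω v = true} ∩ B) (fun _ => (1:ℝ)) ω := by
    funext ω
    rw [ind_indicator (fun ω : V → Bool => (∀ v ∈ α, ω v = true) ∧ (c ≤ Xr (del H' α) r ω)) ω]
    congr 1
  rw [h1, integral_indicator_const _ (measSet _), measureReal_def]
  rw [cylinder_event hp1 α B hBinv]
  rw [smul_eq_mul, mul_one, ENNReal.toReal_mul, ENNReal.toReal_pow, ENNReal.toReal_ofReal hp0]

/-- The recursion. -/
lemma recursion {p : ℝ} (hp0 : 0 ≤ p) (hp1 : p ≤ 1) (H : Finset (Finset V)) {k : ℕ}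
    (hH : ∀ e ∈ H, e.card ≤ k) {r : ℝ} (hr : 0 ≤ r) :
    ∀ (L : ℕ) (s : ℝ), mu H p < s - L*(k*r) → ∀ H' ⊆ H,
      (perc V p {ω | s ≤ Xr H' r ω}).toReal
        ≤ ∏ i ∈ Finset.range (L+1), (mu H p / (s - i*(k*r))) := by
  have hkr : 0 ≤ (k:ℝ)*r := by positivity
  intro L
  induction L with
  | zero =>
    intro s hcond H' hH'
    have hcond' : mu H p < s := by push_cast at hcond; linarith
    have hμ0 : 0 ≤ mu H p := mu_nonneg hp0 hp1 H
    have hs : 0 < s := lt_of_le_of_lt hμ0 hcond'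
    rw [Finset.prod_range_succ, Finset.prod_range_zero, one_mul, Nat.cast_zero, zero_mul, sub_zero]
    -- Markov
    have hpt : ∀ ω : V → Bool, s * ind (s ≤ Xr H' r ω) ≤ XE H' ω := by
      intro ω
      by_cases hev : s ≤ Xr H' r ω
      · rw [ind_of _ hev, mul_one]
        exact le_trans hev (Xr_le_XE hr ω)
      · have : ind (s ≤ Xr H' r ω) = 0 := by unfold ind; split <;> tauto
        rw [this, mul_zero]
        unfold XE; positivity
    have hint : ∫ ω, s * ind (s ≤ Xr H' r ω) ∂(perc V p) ≤ mu H' p :=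
      integral_mono (integr p _) (integr p _) hpt
    have heq : ∫ ω, s * ind (s ≤ Xr H' r ω) ∂(perc V p)
        = s * (perc V p {ω | s ≤ Xr H' r ω}).toReal := by
      rw [MeasureTheory.integral_const_mul]
      congr 1
      have h1 : (fun ω : V → Bool => ind (s ≤ Xr H' r ω))
          = fun ω => Set.indicator {ω : V → Bool | s ≤ Xr H' r ω} (fun _ => (1:ℝ)) ω := by
        funext ω; rw [ind_indicator (fun ω : V → Bool => s ≤ Xr H' r ω) ω]
      rw [h1, integral_indicator_const _ (measSet _), measureReal_def, smul_eq_mul, mul_one]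
    rw [heq] at hint
    rw [← le_div_iff₀' hs] at hint
    exact le_trans hint (div_le_div_of_nonneg_right (mu_mono hp0 hp1 hH') hs.le)
  | succ L ih =>
    intro s hcond H' hH'
    have hμ0 : 0 ≤ mu H p := mu_nonneg hp0 hp1 H
    have hs : 0 < s := by
      have h1 : (0:ℝ) ≤ (L+1 : ℕ) * ((k:ℝ)*r) := by positivity
      push_cast at h1 ⊢
      nlinarith [hcond, hμ0]
    -- the shifted product
    set Q : ℝ := ∏ i ∈ Finset.range (L+1), (mu H p / ((s - k*r) - i*(k*r))) with hQ
    have hQnonneg : 0 ≤ Q := by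
      rw [hQ]
      apply Finset.prod_nonneg
      intro i hi
      apply div_nonneg hμ0
      have hiL : (i:ℝ) ≤ L := by
        have := Finset.mem_range.1 hi
        exact_mod_cast Nat.lt_succ_iff.1 this
      have : mu H p < s - k*r - i*(k*r) := by
        push_cast at hcond
        nlinarith [hkr, hiL]
      linarith
    have hIH : ∀ α ∈ H', (perc V p {ω | s - k*r ≤ Xr (del H' α) r ω}).toReal ≤ Q := by
      intro α hα
      apply ih (s - k*r) _ (del H' α) ((del_subset H' α).trans hH')
      push_cast at hcond ⊢
      nlinarith [hkr]
    -- integrate pointwise bound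
    have hpt := fun ω => key_pointwise hH' hH hr hs.le ω
    have hint : s * (perc V p {ω | s ≤ Xr H' r ω}).toReal
        ≤ ∑ α ∈ H', p ^ α.card * (perc V p {ω | s - k*r ≤ Xr (del H' α) r ω}).toReal := by
      have h1 : ∫ ω, s * ind (s ≤ Xr H' r ω) ∂(perc V p)
          = s * (perc V p {ω | s ≤ Xr H' r ω}).toReal := by
        rw [MeasureTheory.integral_const_mul]
        congr 1
        have h2 : (fun ω : V → Bool => ind (s ≤ Xr H' r ω))
            = fun ω => Set.indicator {ω : V → Bool | s ≤ Xr H' r ω} (fun _ => (1:ℝ)) ω := by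
          funext ω; rw [ind_indicator (fun ω : V → Bool => s ≤ Xr H' r ω) ω]
        rw [h2, integral_indicator_const _ (measSet _), measureReal_def, smul_eq_mul, mul_one]
      have h3 : ∫ ω, (∑ α ∈ H', ind ((∀ v ∈ α, ω v = true) ∧ (s - k*r ≤ Xr (del H' α) r ω))) ∂(perc V p)
          = ∑ α ∈ H', p ^ α.card * (perc V p {ω | s - k*r ≤ Xr (del H' α) r ω}).toReal := by
        rw [integral_finset_sum _ (fun α _ => integr p _)]
        exact Finset.sum_congr rfl fun α _ => integral_del_term hp0 hp1 H' α r (s - k*r)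
      rw [← h1, ← h3]
      exact integral_mono (integr p _) (integr p _) hpt
    have hsum : ∑ α ∈ H', p ^ α.card * (perc V p {ω | s - k*r ≤ Xr (del H' α) r ω}).toReal
        ≤ mu H p * Q := by
      calc ∑ α ∈ H', p ^ α.card * (perc V p {ω | s - k*r ≤ Xr (del H' α) r ω}).toReal
          ≤ ∑ α ∈ H', p ^ α.card * Q := by
            apply Finset.sum_le_sum
            intro α hα
            exact mul_le_mul_of_nonneg_left (hIH α hα) (pow_nonneg hp0 _)
        _ = mu H' p * Q := by rw [← Finset.sum_mul, ← mu_eq hp0 hp1]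
        _ ≤ mu H p * Q := mul_le_mul_of_nonneg_right (mu_mono hp0 hp1 hH') hQnonneg
    -- combine
    have hP : (perc V p {ω | s ≤ Xr H' r ω}).toReal ≤ (mu H p / s) * Q := by
      rw [div_mul_eq_mul_div, le_div_iff₀ hs]
      calc (perc V p {ω | s ≤ Xr H' r ω}).toReal * s
          = s * (perc V p {ω | s ≤ Xr H' r ω}).toReal := by ring
        _ ≤ mu H p * Q := le_trans hint hsum
    refine le_trans hP ?_
    rw [Finset.prod_range_succ']
    have : ∀ i ∈ Finset.range (L+1), mu H p / ((s - k*r) - i*(k*r)) = mu H p / (s - (i+1 : ℕ)*(k*r)) := by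
      intro i hi
      congr 1
      push_cast
      ring
    rw [hQ, Finset.prod_congr rfl this]
    push_cast
    rw [zero_mul, sub_zero, mul_comm]

/-- Lemma 3.1: upper tail estimate for `X_r`. -/
theorem statement9 (k : ℕ) (V : Type) [Fintype V] (H : Finset (Finset V))
    (hH : ∀ e ∈ H, e.card ≤ k) (p : ℝ) (hp0 : 0 ≤ p) (hp1 : p ≤ 1)
    (r t : ℝ) (hr : 0 < r) (ht : 0 < t) :
    (perc V p {ω | mu H p + t/2 ≤ Xr H r ω}).toReal ≤
      Real.exp (-(phi (t / mu H p) * mu H p / (4 * (k:ℝ) * r))) ∧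
    Real.exp (-(phi (t / mu H p) * mu H p / (4 * (k:ℝ) * r))) ≤
      Real.exp (-(min t (t ^ 2 / mu H p) / (12 * (k:ℝ) * r))) := by
  have htoR : (perc V p {ω | mu H p + t/2 ≤ Xr H r ω}).toReal ≤ 1 := by
    calc (perc V p {ω | mu H p + t/2 ≤ Xr H r ω}).toReal
        ≤ (1 : ℝ≥0∞).toReal := ENNReal.toReal_mono ENNReal.one_ne_top prob_le_one
      _ = 1 := by simp
  have hμ0 : 0 ≤ mu H p := mu_nonneg hp0 hp1 H
  constructor
  · -- first inequality
    by_cases hk : k = 0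
    · subst hk
      simp only [Nat.cast_zero, mul_zero, zero_mul, div_zero, neg_zero, Real.exp_zero]
      exact htoR
    by_cases hμ : mu H p = 0
    · have hone : Real.exp (-(phi (t / mu H p) * mu H p / (4 * (k:ℝ) * r))) = 1 := by
        rw [hμ]; simp
      rw [hone]; exact htoR
    have hμpos : 0 < mu H p := lt_of_le_of_ne hμ0 (Ne.symm hμ)
    have hk1 : 1 ≤ k := Nat.one_le_iff_ne_zero.2 hk
    set C : ℝ := (k:ℝ) * r with hC
    have hCpos : 0 < C := by
      rw [hC]
      apply mul_pos _ hr
      exact_mod_cast Nat.pos_of_ne_zero hk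
    set L : ℕ := ⌈t/(2*C)⌉₊ - 1 with hL
    have hN1 : 1 ≤ ⌈t/(2*C)⌉₊ := Nat.one_le_ceil_iff.2 (by positivity)
    have hLcast : (L : ℝ) = (⌈t/(2*C)⌉₊ : ℝ) - 1 := by
      rw [hL]; push_cast [hN1]; ring
    have hL1 : (L:ℝ) * C < t/2 := by
      have h0 := Nat.ceil_lt_add_one (show (0:ℝ) ≤ t/(2*C) by positivity)
      have h2 : ((⌈t/(2*C)⌉₊ : ℝ) - 1) < t/(2*C) := by linarith
      rw [hLcast]
      calc ((⌈t/(2*C)⌉₊ : ℝ) - 1) * C < t/(2*C) * C := mul_lt_mul_of_pos_right h2 hCpos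
        _ = t/2 := by field_simp
    have hcond : mu H p < (mu H p + t/2) - L * ((k:ℝ)*r) := by
      rw [← hC]; linarith
    have hrec := recursion hp0 hp1 H hH hr.le L (mu H p + t/2) hcond H (subset_refl H)
    have hprod := prod_bound (mu H p) C t hμpos hCpos ht
    rw [← hL] at hprod
    calc (perc V p {ω | mu H p + t/2 ≤ Xr H r ω}).toReal
        ≤ ∏ i ∈ Finset.range (L+1), (mu H p / ((mu H p + t/2) - i*((k:ℝ)*r))) := hrec
      _ = ∏ i ∈ Finset.range (L+1), (mu H p / (mu H p + t/2 - i*C)) := by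
          apply Finset.prod_congr rfl
          intro i _
          rw [← hC]
      _ ≤ Real.exp (-(phi (t / mu H p) * mu H p / (4*C))) := hprod
      _ = Real.exp (-(phi (t / mu H p) * mu H p / (4 * (k:ℝ) * r))) := by
          rw [hC, mul_assoc]
  · -- second inequality
    by_cases hk : k = 0
    · subst hk
      simp
    by_cases hμ : mu H p = 0
    · rw [hμ]
      norm_num [min_eq_right ht.le]
    have hμpos : 0 < mu H p := lt_of_le_of_ne hμ0 (Ne.symm hμ)
    have hkr : (0:ℝ) < (k:ℝ) * r := by
      apply mul_pos _ hr
      exact_mod_cast Nat.pos_of_ne_zero hk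
    apply Real.exp_le_exp.2
    apply neg_le_neg
    have hmin := min_le_three_phi hμpos ht
    have hphi0 : 0 ≤ phi (t / mu H p) := phi_nonneg (by positivity)
    rw [div_le_div_iff₀ (by linarith) (by linarith)]
    nlinarith [hmin, mul_nonneg (mul_nonneg hphi0 hμ0) hkr.le]

end UT
end
end

section
/- Suppose H is a hypergraph all of whose edges have at most k vertices. Let X = e(H_p) and, for r > 0, let X_r = max{e(G) : G ⊆ H_p, Δ₁(G) ≤ r}. Then for all p ∈ [0,1] and r > 0 the following deterministic inequalities hold (pointwise on the underlying probability space): X_r ≤ X ≤ X_r + 1{Δ₁(H_p) > r}·k·⌈r⌉·M_r(H_p)·Δ₁(H_p). -/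
open MeasureTheory Real
open scoped ENNReal Classical

noncomputable section

namespace UT

/-- Lemma 3.3 (basic sparsification inequality), pointwise. -/
theorem statement10 (k : ℕ) (V : Type) [Fintype V] (H : Finset (Finset V))
    (hH : ∀ e ∈ H, e.card ≤ k) (p : ℝ) (hp0 : 0 ≤ p) (hp1 : p ≤ 1)
    (r : ℝ) (hr : 0 < r) (ω : V → Bool) :
    Xr H r ω ≤ XE H ω ∧
    XE H ω ≤ Xr H r ω +
      (if r < (maxDeg (HpEdges H ω) : ℝ) then (1:ℝ) else 0) *
        (k : ℝ) * (Nat.ceil r : ℝ) * (Mr (HpEdges H ω) r : ℝ) *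
        (maxDeg (HpEdges H ω) : ℝ) := by
  classical
  have hHpsub : HpEdges H ω ⊆ H := by
    intro e he
    simp only [HpEdges, Finset.mem_filter] at he
    exact he.1
  have hXE : XE H ω = ((HpEdges H ω).card : ℝ) := rfl
  have hXrdef : Xr H r ω = sSup { z : ℝ | ∃ G : Finset (Finset V), G ⊆ HpEdges H ω ∧
      (∀ v : V, (deg G v : ℝ) ≤ r) ∧ z = (G.card : ℝ) } := rfl
  have hbddXr : BddAbove { z : ℝ | ∃ G : Finset (Finset V), G ⊆ HpEdges H ω ∧
      (∀ v : V, (deg G v : ℝ) ≤ r) ∧ z = (G.card : ℝ) } := by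
    refine ⟨((HpEdges H ω).card : ℝ), ?_⟩
    rintro z ⟨G, hG, -, rfl⟩
    exact_mod_cast Finset.card_le_card hG
  have h1 : Xr H r ω ≤ XE H ω := by
    rw [hXrdef, hXE]
    apply Real.sSup_le
    · rintro z ⟨G, hG, -, rfl⟩
      exact_mod_cast Finset.card_le_card hG
    · exact Nat.cast_nonneg _
  refine ⟨h1, ?_⟩
  by_cases hcase : (maxDeg (HpEdges H ω) : ℝ) ≤ r
  · rw [if_neg (not_lt.mpr hcase)]
    have hXle : XE H ω ≤ Xr H r ω := by
      rw [hXrdef]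
      apply le_csSup hbddXr
      refine ⟨HpEdges H ω, le_refl _, fun v => le_trans ?_ hcase, rfl⟩
      exact_mod_cast Finset.le_sup (f := deg (HpEdges H ω)) (Finset.mem_univ v)
    linarith
  · push_neg at hcase
    rw [if_pos hcase]
    -- set of sizes of valid star collections
    have hMrdef : Mr (HpEdges H ω) r = sSup { m : ℕ |
        ∃ M : Finset (V × Finset (Finset V)),
        (∀ S ∈ M, S.2 ⊆ (HpEdges H ω).filter (fun f => S.1 ∈ f) ∧ S.2.card = Nat.ceil r) ∧
        (∀ S ∈ M, ∀ T ∈ M, S ≠ T → Disjoint (starVtx S.2) (starVtx T.2)) ∧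
        m = M.card } := rfl
    set 𝒮 := { m : ℕ | ∃ M : Finset (V × Finset (Finset V)),
        (∀ S ∈ M, S.2 ⊆ (HpEdges H ω).filter (fun f => S.1 ∈ f) ∧ S.2.card = Nat.ceil r) ∧
        (∀ S ∈ M, ∀ T ∈ M, S ≠ T → Disjoint (starVtx S.2) (starVtx T.2)) ∧
        m = M.card } with h𝒮
    have h𝒮ne : 𝒮.Nonempty := ⟨0, ∅, by simp, by simp, by simp⟩
    have h𝒮bdd : BddAbove 𝒮 := by
      refine ⟨Fintype.card (V × Finset (Finset V)), ?_⟩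
      rintro m ⟨M, -, -, rfl⟩
      exact Finset.card_le_univ M
    obtain ⟨M, hM1, hM2, hMcard⟩ := Nat.sSup_mem h𝒮ne h𝒮bdd
    -- U : union of vertex sets of the stars
    set U : Finset V := M.sup (fun S => starVtx S.2) with hU
    set G : Finset (Finset V) := (HpEdges H ω).filter (fun e => Disjoint e U) with hG
    have hGsub : G ⊆ HpEdges H ω := Finset.filter_subset _ _
    -- maximum degree of G is at most r
    have hdegG : ∀ v : V, (deg G v : ℝ) ≤ r := by
      intro v
      by_contra hv
      push_neg at hv
      have hceil : Nat.ceil r ≤ deg G v := Nat.ceil_le.mpr hv.le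
      obtain ⟨W, hWsub, hWcard⟩ :=
        Finset.exists_subset_card_eq (s := G.filter (fun f => v ∈ f)) (n := Nat.ceil r) hceil
      have hWG : ∀ e ∈ W, e ∈ G ∧ v ∈ e := by
        intro e he
        have := hWsub he
        simp only [Finset.mem_filter] at this
        exact this
      have hWdisjU : Disjoint (starVtx W) U := by
        rw [starVtx, Finset.disjoint_sup_left]
        intro e he
        have heG := (hWG e he).1
        rw [hG, Finset.mem_filter] at heG
        exact heG.2
      have hWne : W.Nonempty := by
        rw [← Finset.card_pos, hWcard]
        exact Nat.ceil_pos.mpr hr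
      have hvW : v ∈ starVtx W := by
        obtain ⟨e, he⟩ := hWne
        exact Finset.mem_sup.mpr ⟨e, he, (hWG e he).2⟩
      have hnotmem : (v, W) ∉ M := by
        intro hmem
        have : starVtx W ⊆ U := Finset.le_sup (f := fun S => starVtx S.2) hmem
        exact (Finset.disjoint_left.mp hWdisjU hvW) (this hvW)
      have hins : (M.card + 1) ∈ 𝒮 := by
        refine ⟨insert (v, W) M, ?_, ?_, ?_⟩
        · intro S hS
          rcases Finset.mem_insert.mp hS with h | h
          · subst h
            constructor
            · intro e he
              rw [Finset.mem_filter]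
              exact ⟨hGsub (hWG e he).1, (hWG e he).2⟩
            · exact hWcard
          · exact hM1 S h
        · intro S hS T hT hne
          rcases Finset.mem_insert.mp hS with h | h <;>
            rcases Finset.mem_insert.mp hT with h' | h'
          · exact absurd (h.trans h'.symm) hne
          · subst h
            exact hWdisjU.mono_right (Finset.le_sup (f := fun S => starVtx S.2) h')
          · subst h'
            exact (hWdisjU.mono_right (Finset.le_sup (f := fun S => starVtx S.2) h)).symm
          · exact hM2 S h T h' hne
        · rw [Finset.card_insert_of_notMem hnotmem]
      have := le_csSup h𝒮bdd hins
      rw [hMcard] at this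
      omega
    -- G witnesses a lower bound for Xr
    have hGleXr : ((G.card : ℝ)) ≤ Xr H r ω := by
      rw [hXrdef]
      exact le_csSup hbddXr ⟨G, hGsub, hdegG, rfl⟩
    -- counting: edges meeting U
    have hcount : (HpEdges H ω).card ≤ G.card + U.card * maxDeg (HpEdges H ω) := by
      have hsplit : ((HpEdges H ω).filter (fun e => Disjoint e U)).card +
          ((HpEdges H ω).filter (fun e => ¬ Disjoint e U)).card = (HpEdges H ω).card :=
        Finset.card_filter_add_card_filter_not _
      rw [← hG] at hsplit
      have hsub : (HpEdges H ω).filter (fun e => ¬ Disjoint e U) ⊆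
          U.biUnion (fun u => (HpEdges H ω).filter (fun e => u ∈ e)) := by
        intro e he
        rw [Finset.mem_filter] at he
        obtain ⟨u, hue, huU⟩ := Finset.not_disjoint_iff.mp he.2
        exact Finset.mem_biUnion.mpr ⟨u, huU, Finset.mem_filter.mpr ⟨he.1, hue⟩⟩
      have hbi : ((HpEdges H ω).filter (fun e => ¬ Disjoint e U)).card ≤
          U.card * maxDeg (HpEdges H ω) := by
        calc ((HpEdges H ω).filter (fun e => ¬ Disjoint e U)).card
            ≤ (U.biUnion (fun u => (HpEdges H ω).filter (fun e => u ∈ e))).card :=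
              Finset.card_le_card hsub
          _ ≤ ∑ u ∈ U, ((HpEdges H ω).filter (fun e => u ∈ e)).card :=
              Finset.card_biUnion_le
          _ ≤ ∑ _u ∈ U, maxDeg (HpEdges H ω) := by
              apply Finset.sum_le_sum
              intro u _
              exact Finset.le_sup (f := deg (HpEdges H ω)) (Finset.mem_univ u)
          _ = U.card * maxDeg (HpEdges H ω) := by
              rw [Finset.sum_const, smul_eq_mul]
      omega
    -- bound on |U|
    have hUcard : U.card ≤ M.card * (Nat.ceil r * k) := by
      calc U.card = (M.sup (fun S => starVtx S.2)).card := rfl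
        _ = (M.biUnion (fun S => starVtx S.2)).card := by rw [Finset.sup_eq_biUnion]
        _ ≤ ∑ S ∈ M, (starVtx S.2).card := Finset.card_biUnion_le
        _ ≤ ∑ _S ∈ M, Nat.ceil r * k := by
            apply Finset.sum_le_sum
            intro S hS
            have hS2 : (starVtx S.2).card ≤ ∑ e ∈ S.2, e.card := by
              rw [starVtx, Finset.sup_eq_biUnion]
              simpa using (Finset.card_biUnion_le (s := S.2) (t := id))
            have hS2b : ∑ e ∈ S.2, e.card ≤ ∑ _e ∈ S.2, k := by
              apply Finset.sum_le_sum
              intro e he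
              have := (hM1 S hS).1 he
              rw [Finset.mem_filter] at this
              exact hH e (hHpsub this.1)
            have : ∑ _e ∈ S.2, k = Nat.ceil r * k := by
              rw [Finset.sum_const, smul_eq_mul, (hM1 S hS).2]
            omega
        _ = M.card * (Nat.ceil r * k) := by rw [Finset.sum_const, smul_eq_mul]
    -- M.card ≤ Mr
    have hMle : M.card ≤ Mr (HpEdges H ω) r := by
      rw [hMrdef, hMcard]
    -- put everything together
    have hnat : (HpEdges H ω).card ≤ G.card +
        (Mr (HpEdges H ω) r * (Nat.ceil r * k)) * maxDeg (HpEdges H ω) := by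
      have : U.card * maxDeg (HpEdges H ω) ≤
          (Mr (HpEdges H ω) r * (Nat.ceil r * k)) * maxDeg (HpEdges H ω) := by
        apply Nat.mul_le_mul_right
        calc U.card ≤ M.card * (Nat.ceil r * k) := hUcard
          _ ≤ Mr (HpEdges H ω) r * (Nat.ceil r * k) := Nat.mul_le_mul_right _ hMle
      omega
    rw [hXE]
    have hcast : ((HpEdges H ω).card : ℝ) ≤ (G.card : ℝ) +
        ((Mr (HpEdges H ω) r : ℝ) * ((Nat.ceil r : ℝ) * (k : ℝ))) *
          (maxDeg (HpEdges H ω) : ℝ) := by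
      exact_mod_cast hnat
    calc ((HpEdges H ω).card : ℝ)
        ≤ (G.card : ℝ) + ((Mr (HpEdges H ω) r : ℝ) * ((Nat.ceil r : ℝ) * (k : ℝ))) *
            (maxDeg (HpEdges H ω) : ℝ) := hcast
      _ ≤ Xr H r ω + 1 * (k : ℝ) * (Nat.ceil r : ℝ) * (Mr (HpEdges H ω) r : ℝ) *
            (maxDeg (HpEdges H ω) : ℝ) := by
          have : ((Mr (HpEdges H ω) r : ℝ) * ((Nat.ceil r : ℝ) * (k : ℝ))) *
              (maxDeg (HpEdges H ω) : ℝ) =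
              1 * (k : ℝ) * (Nat.ceil r : ℝ) * (Mr (HpEdges H ω) r : ℝ) *
              (maxDeg (HpEdges H ω) : ℝ) := by ring
          linarith [hGleXr]

end UT
end
end

section
/- For any hypergraph H, all p ∈ [0,1] and all y, r > 0: Pr(M_r(H_p) ≥ y) ≤ Φ_r^{⌈y⌉} / ⌈y⌉! ≤ (1/√(2π⌈y⌉))·(e·Φ_r/⌈y⌉)^{⌈y⌉}, where Φ_r = Σ_{v ∈ V(H)} Pr(|Γ_v(H_p)| ≥ ⌈r⌉). -/
open MeasureTheory Real
open scoped ENNReal Classical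

noncomputable section

namespace UT

section Framework
variable {V : Type} [Fintype V]
def wgt (p : ℝ) (ω : V → Bool) : ℝ := ∏ v, (if ω v = true then p else 1 - p)

def prW (p : ℝ) (A : Set (V → Bool)) : ℝ :=
  ∑ ω ∈ Finset.univ.filter (· ∈ A), wgt p ω

variable {p : ℝ}

lemma prW_eq (A : Set (V → Bool)) :
    prW p A = ∑ ω : V → Bool, if ω ∈ A then wgt p ω else 0 :=
  Finset.sum_filter _ _

lemma wgt_nonneg (hp0 : 0 ≤ p) (hp1 : p ≤ 1) (ω : V → Bool) : 0 ≤ wgt p ω :=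
  Finset.prod_nonneg fun v _ => by by_cases h : ω v = true <;> simp [h] <;> linarith

lemma prW_nonneg (hp0 : 0 ≤ p) (hp1 : p ≤ 1) (A : Set (V → Bool)) : 0 ≤ prW p A :=
  Finset.sum_nonneg fun ω _ => wgt_nonneg hp0 hp1 ω

lemma prW_mono (hp0 : 0 ≤ p) (hp1 : p ≤ 1) {A B : Set (V → Bool)} (h : A ⊆ B) :
    prW p A ≤ prW p B := by
  rw [prW_eq, prW_eq]
  apply Finset.sum_le_sum
  intro ω _
  by_cases hω : ω ∈ A
  · rw [if_pos hω, if_pos (h hω)]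
  · rw [if_neg hω]
    by_cases hω' : ω ∈ B
    · rw [if_pos hω']; exact wgt_nonneg hp0 hp1 ω
    · rw [if_neg hω']

lemma prW_empty : prW p (∅ : Set (V → Bool)) = 0 := by simp [prW]

lemma prW_union_inter (A B : Set (V → Bool)) :
    prW p (A ∪ B) + prW p (A ∩ B) = prW p A + prW p B := by
  rw [prW_eq, prW_eq, prW_eq, prW_eq, ← Finset.sum_add_distrib, ← Finset.sum_add_distrib]
  apply Finset.sum_congr rfl
  intro ω _
  by_cases hA : ω ∈ A <;> by_cases hB : ω ∈ B <;>
    simp [hA, hB, Set.mem_union, Set.mem_inter_iff]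

lemma prW_union_le (hp0 : 0 ≤ p) (hp1 : p ≤ 1) (A B : Set (V → Bool)) :
    prW p (A ∪ B) ≤ prW p A + prW p B := by
  have h1 := prW_union_inter (p := p) A B
  have h2 := prW_nonneg hp0 hp1 (A ∩ B)
  linarith

lemma prW_univ : prW p (Set.univ : Set (V → Bool)) = 1 := by
  rw [prW_eq]
  simp only [Set.mem_univ, if_true]
  have h := Finset.prod_univ_sum (fun _ : V => (Finset.univ : Finset Bool))
    (fun v b => if b = true then p else 1 - p)
  rw [Fintype.piFinset_univ] at h
  rw [show (∑ ω : V → Bool, wgt p ω) = ∑ ω : V → Bool, ∏ v, (if ω v = true then p else 1 - p) from rfl,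
    ← h]
  rw [Finset.prod_eq_one]
  intro v _
  simp

lemma flip_sum (a : V) (Q : (V → Bool) → Prop)
    (hQ : ∀ ω b, Q ω → Q (Function.update ω a b)) (g : (V → Bool) → ℝ)
    (hg : ∀ ω b, g (Function.update ω a b) = g ω) :
    ∑ ω ∈ Finset.univ.filter (fun ω => Q ω ∧ ω a = true), g ω
      = ∑ ω ∈ Finset.univ.filter (fun ω => Q ω ∧ ω a = false), g ω := by
  apply Finset.sum_nbij' (i := fun ω => Function.update ω a false)
    (j := fun ω => Function.update ω a true)
  · intro ω hω
    simp only [Finset.mem_filter, Finset.mem_univ, true_and] at hω ⊢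
    exact ⟨hQ ω false hω.1, Function.update_self a false ω⟩
  · intro ω hω
    simp only [Finset.mem_filter, Finset.mem_univ, true_and] at hω ⊢
    exact ⟨hQ ω true hω.1, Function.update_self a true ω⟩
  · intro ω hω
    simp only [Finset.mem_filter, Finset.mem_univ, true_and] at hω
    rw [Function.update_idem, ← hω.2, Function.update_eq_self]
  · intro ω hω
    simp only [Finset.mem_filter, Finset.mem_univ, true_and] at hω
    rw [Function.update_idem, ← hω.2, Function.update_eq_self]
  · intro ω _
    exact (hg ω false).symm


lemma split_filter_sum (P : (V → Bool) → Prop) (a : V) (g : (V → Bool) → ℝ) :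
    ∑ ω ∈ Finset.univ.filter P, g ω
      = ∑ ω ∈ Finset.univ.filter (fun ω => P ω ∧ ω a = true), g ω
      + ∑ ω ∈ Finset.univ.filter (fun ω => P ω ∧ ω a = false), g ω := by
  have hsplit := Finset.sum_filter_add_sum_filter_not
    (Finset.univ.filter P) (fun ω => ω a = true) g
  rw [Finset.filter_filter, Finset.filter_filter] at hsplit
  rw [← hsplit]
  congr 1
  apply Finset.sum_congr _ (fun _ _ => rfl)
  apply Finset.filter_congr
  intro ω _
  simp only [Bool.not_eq_true]

lemma slice_wgt (P : (V → Bool) → Prop) (a : V) (c : Bool) :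
    ∑ ω ∈ Finset.univ.filter (fun ω => P ω ∧ ω a = c), wgt p ω
      = (if c = true then p else 1 - p)
        * ∑ ω ∈ Finset.univ.filter (fun ω => P ω ∧ ω a = c),
            ∏ v ∈ Finset.univ.erase a, (if ω v = true then p else 1 - p) := by
  rw [Finset.mul_sum]
  apply Finset.sum_congr rfl
  intro ω hω
  simp only [Finset.mem_filter, Finset.mem_univ, true_and] at hω
  rw [show wgt p ω = (if ω a = true then p else 1 - p)
      * ∏ v ∈ Finset.univ.erase a, (if ω v = true then p else 1 - p) from
    (Finset.mul_prod_erase Finset.univ _ (Finset.mem_univ a)).symm, hω.2]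

lemma prW_decomp (a : V) (A : Set (V → Bool)) :
    prW p A = (1 - p) * prW p ((fun ω => Function.update ω a false) ⁻¹' A)
            + p * prW p ((fun ω => Function.update ω a true) ⁻¹' A) := by
  set R : (V → Bool) → ℝ := fun ω => ∏ v ∈ Finset.univ.erase a, (if ω v = true then p else 1 - p)
    with hRdef
  have hR : ∀ (ω : V → Bool) (b : Bool), R (Function.update ω a b) = R ω := by
    intro ω b
    apply Finset.prod_congr rfl
    intro v hv
    rw [Function.update_of_ne (Finset.ne_of_mem_erase hv)]
  have key : ∀ b : Bool, prW p ((fun ω => Function.update ω a b) ⁻¹' A)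
      = ∑ ω ∈ Finset.univ.filter (fun ω => ω ∈ A ∧ ω a = b), R ω := by
    intro b
    have hQ : ∀ (ω : V → Bool) (c : Bool), Function.update ω a b ∈ A →
        Function.update (Function.update ω a c) a b ∈ A := by
      intro ω c h; rwa [Function.update_idem]
    have hflip := flip_sum a (fun ω => Function.update ω a b ∈ A) hQ R hR
    have hpre : prW p ((fun ω => Function.update ω a b) ⁻¹' A)
        = ∑ ω ∈ Finset.univ.filter (fun ω : V → Bool => Function.update ω a b ∈ A), wgt p ω := rfl
    rw [hpre, split_filter_sum _ a, slice_wgt, slice_wgt]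
    have ident : Finset.univ.filter (fun ω : V → Bool => Function.update ω a b ∈ A ∧ ω a = b)
        = Finset.univ.filter (fun ω : V → Bool => ω ∈ A ∧ ω a = b) := by
      apply Finset.filter_congr
      intro ω _
      refine and_congr_left fun h2 => ?_
      rw [← h2, Function.update_eq_self]
    cases b
    · rw [hflip] at *
      rw [← ident]
      norm_num [hRdef]
      ring
    · rw [← ident]
      rw [← hflip]
      norm_num [hRdef]
      ring
  rw [key, key]
  rw [show prW p A = ∑ ω ∈ Finset.univ.filter (fun ω : V → Bool => ω ∈ A), wgt p ω from rfl,
    split_filter_sum _ a, slice_wgt, slice_wgt]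
  norm_num [hRdef]
  ring

/-- `C` is an all-true certificate for `A` at `ω`. -/
def certT (C : Finset V) (A : Set (V → Bool)) (ω : V → Bool) : Prop :=
  (∀ v ∈ C, ω v = true) ∧ ∀ ω' : V → Bool, (∀ v ∈ C, ω' v = true) → ω' ∈ A

/-- Disjoint occurrence of `A` and `B` with certificates inside `E`. -/
def DOE (E : Finset V) (A B : Set (V → Bool)) : Set (V → Bool) :=
  {ω | ∃ S T : Finset V, S ⊆ E ∧ T ⊆ E ∧ Disjoint S T ∧ certT S A ω ∧ certT T B ω}

def Incr (A : Set (V → Bool)) : Prop :=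
  ∀ ω ω' : V → Bool, (∀ v, ω v = true → ω' v = true) → ω ∈ A → ω' ∈ A

lemma certT_sub {C : Finset V} {A A' : Set (V → Bool)} {ω : V → Bool}
    (h : A ⊆ A') (hc : certT C A ω) : certT C A' ω :=
  ⟨hc.1, fun ω' hω' => h (hc.2 ω' hω')⟩

lemma Incr_update {A : Set (V → Bool)} (hA : Incr A) (a : V) (b : Bool) :
    Incr ((fun ω => Function.update ω a b) ⁻¹' A) := by
  intro ω ω' hle h
  refine hA (Function.update ω a b) (Function.update ω' a b) ?_ h
  intro v hv
  by_cases hva : v = a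
  · subst hva; rwa [Function.update_self] at hv ⊢
  · rw [Function.update_of_ne hva] at hv ⊢; exact hle v hv

lemma update_false_subset_true {A : Set (V → Bool)} (hA : Incr A) (a : V) :
    ((fun ω => Function.update ω a false) ⁻¹' A) ⊆ ((fun ω => Function.update ω a true) ⁻¹' A) := by
  intro ω h
  refine hA (Function.update ω a false) (Function.update ω a true) ?_ h
  intro v hv
  by_cases hva : v = a
  · subst hva; rw [Function.update_self]
  · rw [Function.update_of_ne hva] at hv ⊢; exact hv

theorem BK2 (hp0 : 0 ≤ p) (hp1 : p ≤ 1) (E : Finset V) :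
    ∀ A B : Set (V → Bool), Incr A → Incr B →
      prW p (DOE E A B) ≤ prW p A * prW p B := by
  induction E using Finset.induction_on with
  | empty =>
    intro A B hA hB
    by_cases hne : (DOE ∅ A B).Nonempty
    · obtain ⟨ω₀, S, T, hS, hT, _, hcA, hcB⟩ := hne
      have hSe : S = ∅ := Finset.subset_empty.mp hS
      have hTe : T = ∅ := Finset.subset_empty.mp hT
      have hAu : A = Set.univ :=
        Set.eq_univ_of_forall (fun ω' => hcA.2 ω' (by simp [hSe]))
      have hBu : B = Set.univ :=
        Set.eq_univ_of_forall (fun ω' => hcB.2 ω' (by simp [hTe]))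
      have h1 : prW p (DOE ∅ A B) ≤ prW p (Set.univ : Set (V → Bool)) :=
        prW_mono hp0 hp1 (Set.subset_univ _)
      rw [hAu, hBu, prW_univ] at *
      linarith
    · rw [Set.not_nonempty_iff_eq_empty.mp hne, prW_empty]
      exact mul_nonneg (prW_nonneg hp0 hp1 A) (prW_nonneg hp0 hp1 B)
  | @insert a E' haE IH =>
    intro A B hA hB
    set AF := (fun ω : V → Bool => Function.update ω a false) ⁻¹' A with hAFd
    set AT := (fun ω : V → Bool => Function.update ω a true) ⁻¹' A with hATd
    set BF := (fun ω : V → Bool => Function.update ω a false) ⁻¹' B with hBFd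
    set BT := (fun ω : V → Bool => Function.update ω a true) ⁻¹' B with hBTd
    set D := DOE (insert a E') A B with hDd
    set X := DOE E' AT BF with hXd
    set Y := DOE E' AF BT with hYd
    set Z := DOE E' AF BF with hZd
    set W' := DOE E' AT BT with hWd
    -- inclusion 1
    have incl1 : (fun ω : V → Bool => Function.update ω a false) ⁻¹' D ⊆ Z := by
      intro ω hω
      replace hω : Function.update ω a false ∈ D := hω
      obtain ⟨S, T, hSE, hTE, hdisj, ⟨hSon, hScert⟩, ⟨hTon, hTcert⟩⟩ := hω
      have haS : a ∉ S := fun h => by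
        have := hSon a h; rw [Function.update_self] at this; exact Bool.false_ne_true this
      have haT : a ∉ T := fun h => by
        have := hTon a h; rw [Function.update_self] at this; exact Bool.false_ne_true this
      refine ⟨S, T, ?_, ?_, hdisj, ⟨?_, ?_⟩, ⟨?_, ?_⟩⟩
      · exact fun v hv => (Finset.mem_insert.mp (hSE hv)).resolve_left (by rintro rfl; exact haS hv)
      · exact fun v hv => (Finset.mem_insert.mp (hTE hv)).resolve_left (by rintro rfl; exact haT hv)
      · intro v hv
        have := hSon v hv
        rwa [Function.update_of_ne (by rintro rfl; exact haS hv)] at this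
      · intro ω' hω'
        refine hScert (Function.update ω' a false) ?_
        intro v hv
        rw [Function.update_of_ne (by rintro rfl; exact haS hv)]
        exact hω' v hv
      · intro v hv
        have := hTon v hv
        rwa [Function.update_of_ne (by rintro rfl; exact haT hv)] at this
      · intro ω' hω'
        refine hTcert (Function.update ω' a false) ?_
        intro v hv
        rw [Function.update_of_ne (by rintro rfl; exact haT hv)]
        exact hω' v hv
    -- inclusion 2
    have incl2 : (fun ω : V → Bool => Function.update ω a true) ⁻¹' D ⊆ X ∪ Y := by
      intro ω hω
      replace hω : Function.update ω a true ∈ D := hω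
      obtain ⟨S, T, hSE, hTE, hdisj, ⟨hSon, hScert⟩, ⟨hTon, hTcert⟩⟩ := hω
      by_cases haT : a ∈ T
      · right
        have haS : a ∉ S := fun h => (Finset.disjoint_left.mp hdisj h) haT
        refine ⟨S, T.erase a, ?_, ?_, ?_, ⟨?_, ?_⟩, ⟨?_, ?_⟩⟩
        · exact fun v hv => (Finset.mem_insert.mp (hSE hv)).resolve_left (by rintro rfl; exact haS hv)
        · intro v hv
          obtain ⟨hne, hvT⟩ := Finset.mem_erase.mp hv
          exact (Finset.mem_insert.mp (hTE hvT)).resolve_left hne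
        · exact Finset.disjoint_of_subset_right (Finset.erase_subset _ _) hdisj
        · intro v hv
          have := hSon v hv
          rwa [Function.update_of_ne (by rintro rfl; exact haS hv)] at this
        · intro ω' hω'
          refine hScert (Function.update ω' a false) ?_
          intro v hv
          rw [Function.update_of_ne (by rintro rfl; exact haS hv)]
          exact hω' v hv
        · intro v hv
          obtain ⟨hne, _⟩ := Finset.mem_erase.mp hv
          have := hTon v (Finset.mem_of_mem_erase hv)
          rwa [Function.update_of_ne hne] at this
        · intro ω' hω'
          refine hTcert (Function.update ω' a true) ?_
          intro v hv
          by_cases hva : v = a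
          · subst hva; rw [Function.update_self]
          · rw [Function.update_of_ne hva]
            exact hω' v (Finset.mem_erase.mpr ⟨hva, hv⟩)
      · left
        refine ⟨S.erase a, T, ?_, ?_, ?_, ⟨?_, ?_⟩, ⟨?_, ?_⟩⟩
        · intro v hv
          obtain ⟨hne, hvS⟩ := Finset.mem_erase.mp hv
          exact (Finset.mem_insert.mp (hSE hvS)).resolve_left hne
        · exact fun v hv => (Finset.mem_insert.mp (hTE hv)).resolve_left (by rintro rfl; exact haT hv)
        · exact Finset.disjoint_of_subset_left (Finset.erase_subset _ _) hdisj
        · intro v hv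
          obtain ⟨hne, _⟩ := Finset.mem_erase.mp hv
          have := hSon v (Finset.mem_of_mem_erase hv)
          rwa [Function.update_of_ne hne] at this
        · intro ω' hω'
          refine hScert (Function.update ω' a true) ?_
          intro v hv
          by_cases hva : v = a
          · subst hva; rw [Function.update_self]
          · rw [Function.update_of_ne hva]
            exact hω' v (Finset.mem_erase.mpr ⟨hva, hv⟩)
        · intro v hv
          have := hTon v hv
          rwa [Function.update_of_ne (by rintro rfl; exact haT hv)] at this
        · intro ω' hω'
          refine hTcert (Function.update ω' a false) ?_
          intro v hv
          rw [Function.update_of_ne (by rintro rfl; exact haT hv)]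
          exact hω' v hv
    -- inclusions 3, 4
    have hAsub : AF ⊆ AT := update_false_subset_true hA a
    have hBsub : BF ⊆ BT := update_false_subset_true hB a
    have incl3 : Z ⊆ X ∩ Y := by
      rintro ω ⟨S, T, hSE, hTE, hdisj, hcS, hcT⟩
      exact ⟨⟨S, T, hSE, hTE, hdisj, certT_sub hAsub hcS, hcT⟩,
             ⟨S, T, hSE, hTE, hdisj, hcS, certT_sub hBsub hcT⟩⟩
    have incl4 : X ∪ Y ⊆ W' := by
      rintro ω (⟨S, T, hSE, hTE, hdisj, hcS, hcT⟩ | ⟨S, T, hSE, hTE, hdisj, hcS, hcT⟩)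
      · exact ⟨S, T, hSE, hTE, hdisj, hcS, certT_sub hBsub hcT⟩
      · exact ⟨S, T, hSE, hTE, hdisj, certT_sub hAsub hcS, hcT⟩
    -- abbreviations
    have hAFi : Incr AF := Incr_update hA a false
    have hATi : Incr AT := Incr_update hA a true
    have hBFi : Incr BF := Incr_update hB a false
    have hBTi : Incr BT := Incr_update hB a true
    have h00 : prW p Z ≤ prW p AF * prW p BF := IH AF BF hAFi hBFi
    have h10 : prW p X ≤ prW p AT * prW p BF := IH AT BF hATi hBFi
    have h01 : prW p Y ≤ prW p AF * prW p BT := IH AF BT hAFi hBTi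
    have h11 : prW p W' ≤ prW p AT * prW p BT := IH AT BT hATi hBTi
    have h1p : (0:ℝ) ≤ 1 - p := by linarith
    have hdec := prW_decomp (p := p) a D
    have hdF : prW p ((fun ω : V → Bool => Function.update ω a false) ⁻¹' D) ≤ prW p Z :=
      prW_mono hp0 hp1 incl1
    have hdT : prW p ((fun ω : V → Bool => Function.update ω a true) ⁻¹' D) ≤ prW p (X ∪ Y) :=
      prW_mono hp0 hp1 incl2
    have hui := prW_union_inter (p := p) X Y
    have hXYi : prW p Z ≤ prW p (X ∩ Y) := prW_mono hp0 hp1 incl3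
    have hu1 : prW p (X ∪ Y) ≤ prW p X + prW p Y - prW p Z := by linarith
    have hu2 : prW p (X ∪ Y) ≤ prW p W' := prW_mono hp0 hp1 incl4
    have hu : prW p (X ∪ Y) ≤ (1 - p) * (prW p X + prW p Y - prW p Z) + p * prW p W' := by
      nlinarith [mul_le_mul_of_nonneg_left hu1 h1p, mul_le_mul_of_nonneg_left hu2 hp0]
    have hdecA := prW_decomp (p := p) a A
    have hdecB := prW_decomp (p := p) a B
    rw [hdec, hdecA, hdecB]
    have c1 : (1-p)^2 * prW p Z ≤ (1-p)^2 * (prW p AF * prW p BF) :=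
      mul_le_mul_of_nonneg_left h00 (sq_nonneg _)
    have c2 : (p*(1-p)) * prW p X ≤ (p*(1-p)) * (prW p AT * prW p BF) :=
      mul_le_mul_of_nonneg_left h10 (mul_nonneg hp0 h1p)
    have c3 : (p*(1-p)) * prW p Y ≤ (p*(1-p)) * (prW p AF * prW p BT) :=
      mul_le_mul_of_nonneg_left h01 (mul_nonneg hp0 h1p)
    have c4 : p^2 * prW p W' ≤ p^2 * (prW p AT * prW p BT) :=
      mul_le_mul_of_nonneg_left h11 (sq_nonneg _)
    have hstep : (1 - p) * prW p ((fun ω : V → Bool => Function.update ω a false) ⁻¹' D)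
        + p * prW p ((fun ω : V → Bool => Function.update ω a true) ⁻¹' D)
        ≤ (1-p) * prW p Z + p * ((1 - p) * (prW p X + prW p Y - prW p Z) + p * prW p W') := by
      have := mul_le_mul_of_nonneg_left hdF h1p
      have := mul_le_mul_of_nonneg_left (hdT.trans hu) hp0
      linarith
    nlinarith [hstep, c1, c2, c3, c4]

lemma Incr_DOE (E : Finset V) (A B : Set (V → Bool)) : Incr (DOE E A B) := by
  rintro ω ω' hle ⟨S, T, hSE, hTE, hdisj, ⟨hSon, hScert⟩, ⟨hTon, hTcert⟩⟩
  exact ⟨S, T, hSE, hTE, hdisj, ⟨fun v hv => hle v (hSon v hv), hScert⟩,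
    ⟨fun v hv => hle v (hTon v hv), hTcert⟩⟩

def DOiter : List (Set (V → Bool)) → Set (V → Bool)
  | [] => Set.univ
  | A :: L => DOE Finset.univ A (DOiter L)

lemma Incr_DOiter (L : List (Set (V → Bool))) : Incr (DOiter L) := by
  cases L with
  | nil => exact fun ω ω' _ _ => Set.mem_univ ω'
  | cons A L => exact Incr_DOE _ _ _

lemma prW_DOiter (hp0 : 0 ≤ p) (hp1 : p ≤ 1) :
    ∀ L : List (Set (V → Bool)), (∀ A ∈ L, Incr A) →
      prW p (DOiter L) ≤ (L.map (prW p)).prod := by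
  intro L
  induction L with
  | nil => intro _; simp only [DOiter, List.map_nil, List.prod_nil, prW_univ]; exact le_refl 1
  | cons A L IH =>
    intro h
    have h1 : prW p (DOiter (A :: L)) ≤ prW p A * prW p (DOiter L) :=
      BK2 hp0 hp1 Finset.univ A (DOiter L) (h A (List.mem_cons_self)) (Incr_DOiter L)
    calc prW p (DOiter (A :: L)) ≤ prW p A * prW p (DOiter L) := h1
      _ ≤ prW p A * (L.map (prW p)).prod :=
          mul_le_mul_of_nonneg_left (IH (fun B hB => h B (List.mem_cons_of_mem _ hB)))
            (prW_nonneg hp0 hp1 A)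
      _ = ((A :: L).map (prW p)).prod := by rw [List.map_cons, List.prod_cons]

def certUnion (l : List (Finset V)) : Finset V := l.foldr (· ∪ ·) ∅

lemma mem_certUnion {v : V} : ∀ {l : List (Finset V)}, v ∈ certUnion l ↔ ∃ s ∈ l, v ∈ s := by
  intro l
  induction l with
  | nil => simp [certUnion]
  | cons s l ih =>
    have h : certUnion (s :: l) = s ∪ certUnion l := rfl
    rw [h, Finset.mem_union, ih]
    constructor
    · rintro (h' | ⟨t, ht, hvt⟩)
      · exact ⟨s, List.mem_cons_self, h'⟩
      · exact ⟨t, List.mem_cons_of_mem _ ht, hvt⟩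
    · rintro ⟨t, ht, hvt⟩
      rcases List.mem_cons.mp ht with rfl | ht'
      · exact Or.inl hvt
      · exact Or.inr ⟨t, ht', hvt⟩

lemma mem_DOiter : ∀ (P : List (Set (V → Bool) × Finset V)) (ω : V → Bool),
    P.Pairwise (fun x y => Disjoint x.2 y.2) →
    (∀ x ∈ P, certT x.2 x.1 ω) → ω ∈ DOiter (P.map Prod.fst) := by
  intro P
  induction P with
  | nil => intro ω _ _; exact Set.mem_univ ω
  | cons x P IH =>
    intro ω hpw hc
    obtain ⟨hhead, htail⟩ := List.pairwise_cons.mp hpw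
    refine ⟨x.2, certUnion (P.map Prod.snd), Finset.subset_univ _, Finset.subset_univ _, ?_,
      hc x (List.mem_cons_self), ⟨?_, ?_⟩⟩
    · rw [Finset.disjoint_left]
      intro v hv hv'
      obtain ⟨s, hs, hvs⟩ := mem_certUnion.mp hv'
      obtain ⟨y, hy, rfl⟩ := List.mem_map.mp hs
      exact Finset.disjoint_left.mp (hhead y hy) hv hvs
    · intro v hv
      obtain ⟨s, hs, hvs⟩ := mem_certUnion.mp hv
      obtain ⟨y, hy, rfl⟩ := List.mem_map.mp hs
      exact (hc y (List.mem_cons_of_mem _ hy)).1 v hvs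
    · intro ω' hω'
      refine IH ω' htail ?_
      intro y hy
      exact ⟨fun v hv => hω' v (mem_certUnion.mpr ⟨y.2, List.mem_map_of_mem hy, hv⟩),
        (hc y (List.mem_cons_of_mem _ hy)).2⟩

lemma prW_biUnion_le (hp0 : 0 ≤ p) (hp1 : p ≤ 1) {ι : Type} (t : Finset ι)
    (f : ι → Set (V → Bool)) :
    prW p (⋃ i ∈ t, f i) ≤ ∑ i ∈ t, prW p (f i) := by
  induction t using Finset.induction_on with
  | empty => simp [prW_empty]
  | @insert a s ha IH =>
    rw [Finset.set_biUnion_insert, Finset.sum_insert ha]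
    exact (prW_union_le hp0 hp1 _ _).trans (add_le_add le_rfl IH)

lemma toList_map_prod {α : Type} (s : Finset α) (f : α → ℝ) :
    (s.toList.map f).prod = s.prod f := by
  rw [← Multiset.prod_coe, ← Multiset.map_coe, Finset.coe_toList, Finset.prod_eq_multiset_prod]

lemma factorial_mul_sum_powersetCard_le (u : Finset V) (a : V → ℝ) (ha : ∀ v, 0 ≤ a v) :
    ∀ k : ℕ, (k.factorial : ℝ) * ∑ s ∈ u.powersetCard k, ∏ v ∈ s, a v ≤ (∑ v ∈ u, a v) ^ k := by
  intro k
  induction k with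
  | zero => simp
  | succ k IH =>
    have key : ((k : ℝ) + 1) * ∑ s ∈ u.powersetCard (k+1), ∏ v ∈ s, a v
        ≤ (∑ v ∈ u, a v) * ∑ s ∈ u.powersetCard k, ∏ v ∈ s, a v := by
      have h1 : ((k : ℝ) + 1) * ∑ s ∈ u.powersetCard (k+1), ∏ v ∈ s, a v
          = ∑ t ∈ u.powersetCard (k+1), ∑ v ∈ t, a v * ∏ w ∈ t.erase v, a w := by
        rw [Finset.mul_sum]
        apply Finset.sum_congr rfl
        intro t ht
        have htc : t.card = k+1 := (Finset.mem_powersetCard.mp ht).2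
        rw [Finset.sum_congr rfl (fun v hv => Finset.mul_prod_erase t a hv),
          Finset.sum_const, htc]
        push_cast
        ring
      rw [h1]
      have h2 : ∑ t ∈ u.powersetCard (k+1), ∑ v ∈ t, a v * ∏ w ∈ t.erase v, a w
          = ∑ v ∈ u, ∑ s ∈ (u.erase v).powersetCard k, a v * ∏ w ∈ s, a w := by
        rw [Finset.sum_sigma' (u.powersetCard (k+1)) (fun t => t)
            (fun t v => a v * ∏ w ∈ t.erase v, a w),
          Finset.sum_sigma' u (fun v => (u.erase v).powersetCard k)
            (fun v s => a v * ∏ w ∈ s, a w)]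
        apply Finset.sum_nbij' (i := fun x => (⟨x.2, x.1.erase x.2⟩ : (_ : V) × Finset V))
          (j := fun x => (⟨insert x.1 x.2, x.1⟩ : (_ : Finset V) × V))
        · rintro ⟨t, v⟩ hx
          rw [Finset.mem_sigma] at hx
          obtain ⟨ht, hv⟩ := hx
          obtain ⟨hsub, hcard⟩ := Finset.mem_powersetCard.mp ht
          rw [Finset.mem_sigma]
          refine ⟨hsub hv, Finset.mem_powersetCard.mpr ⟨Finset.erase_subset_erase _ hsub, ?_⟩⟩
          rw [Finset.card_erase_of_mem hv, hcard]
          omega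
        · rintro ⟨v, s⟩ hx
          rw [Finset.mem_sigma] at hx
          obtain ⟨hv, hs⟩ := hx
          obtain ⟨hsub, hcard⟩ := Finset.mem_powersetCard.mp hs
          have hvs : v ∉ s := fun h => (Finset.mem_erase.mp (hsub h)).1 rfl
          rw [Finset.mem_sigma]
          constructor
          · refine Finset.mem_powersetCard.mpr ⟨?_, ?_⟩
            · intro w hw
              rcases Finset.mem_insert.mp hw with rfl | hw'
              · exact hv
              · exact Finset.mem_of_mem_erase (hsub hw')
            · rw [Finset.card_insert_of_notMem hvs, hcard]
          · exact Finset.mem_insert_self _ _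
        · rintro ⟨t, v⟩ hx
          rw [Finset.mem_sigma] at hx
          simp [Finset.insert_erase hx.2]
        · rintro ⟨v, s⟩ hx
          rw [Finset.mem_sigma] at hx
          have hvs : v ∉ s := fun h =>
            (Finset.mem_erase.mp ((Finset.mem_powersetCard.mp hx.2).1 h)).1 rfl
          simp [Finset.erase_insert hvs]
        · rintro ⟨t, v⟩ hx
          rfl
      rw [h2]
      calc ∑ v ∈ u, ∑ s ∈ (u.erase v).powersetCard k, a v * ∏ w ∈ s, a w
          ≤ ∑ v ∈ u, ∑ s ∈ u.powersetCard k, a v * ∏ w ∈ s, a w := by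
            apply Finset.sum_le_sum
            intro v _
            apply Finset.sum_le_sum_of_subset_of_nonneg
              (Finset.powersetCard_mono (Finset.erase_subset _ _))
            intro s _ _
            exact mul_nonneg (ha v) (Finset.prod_nonneg fun w _ => ha w)
        _ = (∑ v ∈ u, a v) * ∑ s ∈ u.powersetCard k, ∏ w ∈ s, a w := by
            rw [Finset.sum_mul]
            apply Finset.sum_congr rfl
            intro v _
            rw [Finset.mul_sum]
    have hpos : (0:ℝ) ≤ ∑ s ∈ u.powersetCard k, ∏ v ∈ s, a v :=
      Finset.sum_nonneg fun s _ => Finset.prod_nonneg fun w _ => ha w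
    have hsum : (0:ℝ) ≤ ∑ v ∈ u, a v := Finset.sum_nonneg fun v _ => ha v
    calc ((k+1).factorial : ℝ) * ∑ s ∈ u.powersetCard (k+1), ∏ v ∈ s, a v
        = (k.factorial : ℝ) * (((k:ℝ)+1) * ∑ s ∈ u.powersetCard (k+1), ∏ v ∈ s, a v) := by
          rw [Nat.factorial_succ]; push_cast; ring
      _ ≤ (k.factorial : ℝ) * ((∑ v ∈ u, a v) * ∑ s ∈ u.powersetCard k, ∏ v ∈ s, a v) := by
          exact mul_le_mul_of_nonneg_left key (by positivity)
      _ = (∑ v ∈ u, a v) * ((k.factorial : ℝ) * ∑ s ∈ u.powersetCard k, ∏ v ∈ s, a v) := by ring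
      _ ≤ (∑ v ∈ u, a v) * (∑ v ∈ u, a v) ^ k := mul_le_mul_of_nonneg_left IH hsum
      _ = (∑ v ∈ u, a v) ^ (k+1) := by rw [pow_succ]; ring

end Framework

section Bridge

lemma bern_singleton_toReal {p : ℝ} (hp0 : 0 ≤ p) (hp1 : p ≤ 1) (b : Bool) :
    (bern p {b}).toReal = if b = true then p else 1 - p := by
  have hle : Real.toNNReal p ≤ 1 := Real.toNNReal_le_one.mpr hp1
  have hmin : min (Real.toNNReal p) 1 = Real.toNNReal p := min_eq_left hle
  rw [bern, PMF.toMeasure_apply_singleton _ b (measurableSet_singleton b),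
    PMF.bernoulli_apply]
  cases b
  · simp [hmin, NNReal.coe_sub hle, Real.coe_toNNReal _ hp0]
    rw [ENNReal.toReal_sub_of_le (ENNReal.coe_le_one_iff.mpr hle) ENNReal.one_ne_top]
    simp [Real.coe_toNNReal _ hp0]
  · simp [hmin, Real.coe_toNNReal _ hp0]

lemma perc_toReal (V : Type) [Fintype V] {p : ℝ} (hp0 : 0 ≤ p) (hp1 : p ≤ 1)
    (A : Set (V → Bool)) : (perc V p A).toReal = prW p A := by
  have hms : ∀ ω : V → Bool, MeasurableSet ({ω} : Set (V → Bool)) := by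
    intro ω
    rw [← Set.univ_pi_singleton]
    exact MeasurableSet.univ_pi fun v => measurableSet_singleton _
  have hA : A = ⋃ ω ∈ Finset.univ.filter (· ∈ A), ({ω} : Set (V → Bool)) := by
    ext ω; simp
  have hdisj : (↑(Finset.univ.filter (· ∈ A)) : Set (V → Bool)).PairwiseDisjoint
      (fun ω => ({ω} : Set (V → Bool))) := fun ω1 _ ω2 _ hne => Set.disjoint_singleton.mpr hne
  have hsing : ∀ ω : V → Bool, perc V p {ω} = ∏ v, bern p {ω v} := by
    intro ω
    rw [perc, ← Set.univ_pi_singleton, Measure.pi_pi]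
  have h3 := measure_biUnion_finset hdisj (fun ω _ => hms ω) (μ := perc V p)
  rw [← hA] at h3
  rw [h3, ENNReal.toReal_sum]
  · apply Finset.sum_congr rfl
    intro ω _
    rw [hsing, ENNReal.toReal_prod]
    unfold wgt
    exact Finset.prod_congr rfl fun v _ => bern_singleton_toReal hp0 hp1 (ω v)
  · intro ω _
    rw [hsing]
    exact (ENNReal.prod_lt_top (fun v _ => measure_lt_top (bern p) _)).ne

end Bridge

section Stars
variable {V : Type} [Fintype V]

def Av (H : Finset (Finset V)) (r : ℝ) (v : V) : Set (V → Bool) :=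
  {ω | Nat.ceil r ≤ deg (HpEdges H ω) v}

lemma HpEdges_mono {H : Finset (Finset V)} {ω ω' : V → Bool}
    (hle : ∀ v, ω v = true → ω' v = true) : HpEdges H ω ⊆ HpEdges H ω' := by
  intro f hf
  simp only [HpEdges, Finset.mem_filter] at hf ⊢
  exact ⟨hf.1, fun v hv => hle v (hf.2 v hv)⟩

lemma Incr_Av (H : Finset (Finset V)) (r : ℝ) (v : V) : Incr (Av H r v) := by
  intro ω ω' hle h
  refine le_trans h (Finset.card_le_card ?_)
  exact Finset.filter_subset_filter _ (HpEdges_mono hle)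

lemma event_subset_union (H : Finset (Finset V)) (r y : ℝ) (hr : 0 < r) :
    {ω : V → Bool | y ≤ (Mr (HpEdges H ω) r : ℝ)} ⊆
      ⋃ s ∈ (Finset.univ : Finset V).powersetCard (Nat.ceil y),
        DOiter (s.toList.map (Av H r)) := by
  intro ω hω
  set G := HpEdges H ω with hGdef
  set k := Nat.ceil y with hkdef
  have hk : k ≤ Mr G r := Nat.ceil_le.mpr hω
  have h0 : 0 ∈ { m : ℕ | ∃ M : Finset (V × Finset (Finset V)),
      (∀ S ∈ M, S.2 ⊆ G.filter (fun f => S.1 ∈ f) ∧ S.2.card = Nat.ceil r) ∧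
      (∀ S ∈ M, ∀ T ∈ M, S ≠ T → Disjoint (starVtx S.2) (starVtx T.2)) ∧
      m = M.card } := ⟨∅, by simp, by simp, by simp⟩
  have hbdd : BddAbove { m : ℕ | ∃ M : Finset (V × Finset (Finset V)),
      (∀ S ∈ M, S.2 ⊆ G.filter (fun f => S.1 ∈ f) ∧ S.2.card = Nat.ceil r) ∧
      (∀ S ∈ M, ∀ T ∈ M, S ≠ T → Disjoint (starVtx S.2) (starVtx T.2)) ∧
      m = M.card } := by
    refine ⟨Fintype.card (V × Finset (Finset V)), ?_⟩
    rintro m ⟨M, _, _, rfl⟩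
    exact Finset.card_le_univ M
  have hmem := Nat.sSup_mem ⟨0, h0⟩ hbdd
  rw [show sSup _ = Mr G r from rfl] at hmem
  obtain ⟨M, hM1, hM2, hMc⟩ := hmem
  have hkM : k ≤ M.card := hMc ▸ hk
  obtain ⟨M', hM'sub, hM'card⟩ := Finset.exists_subset_card_eq hkM
  have hcenter : ∀ S ∈ M', S.1 ∈ starVtx S.2 := by
    intro S hS
    obtain ⟨hsub, hcard⟩ := hM1 S (hM'sub hS)
    have hpos : 0 < S.2.card := hcard ▸ Nat.ceil_pos.mpr hr
    obtain ⟨f, hf⟩ := Finset.card_pos.mp hpos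
    have hmemf := hsub hf
    rw [Finset.mem_filter] at hmemf
    exact Finset.mem_sup.mpr ⟨f, hf, hmemf.2⟩
  have hinj : Set.InjOn (fun S : V × Finset (Finset V) => S.1) M' := by
    intro S hS T hT hST
    by_contra hne
    have hdisj := hM2 S (hM'sub hS) T (hM'sub hT) hne
    have hST' : S.1 = T.1 := hST
    have h2 : S.1 ∈ starVtx T.2 := by rw [hST']; exact hcenter T hT
    exact Finset.disjoint_left.mp hdisj (hcenter S hS) h2
  set s := M'.image (fun S => S.1) with hsdef
  have hscard : s.card = k := by
    rw [hsdef, Finset.card_image_of_injOn hinj, hM'card]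
  have hpick : ∀ v ∈ s, ∃ S, S ∈ M' ∧ S.1 = v := by
    intro v hv
    rw [hsdef, Finset.mem_image] at hv
    obtain ⟨S, hS, hSv⟩ := hv
    exact ⟨S, hS, hSv⟩
  classical
  set F : V → Finset (Finset V) :=
    fun v => if h : ∃ S, S ∈ M' ∧ S.1 = v then h.choose.2 else ∅ with hFdef
  have hFspec : ∀ v ∈ s, ∃ S, S ∈ M' ∧ S.1 = v ∧ F v = S.2 := by
    intro v hv
    have h := hpick v hv
    refine ⟨h.choose, h.choose_spec.1, h.choose_spec.2, ?_⟩
    rw [hFdef]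
    simp only [dif_pos h]
  refine Set.mem_biUnion (Finset.mem_powersetCard.mpr ⟨Finset.subset_univ s, hscard⟩) ?_
  have hmap : s.toList.map (Av H r)
      = (s.toList.map (fun v => (Av H r v, starVtx (F v)))).map Prod.fst := by
    rw [List.map_map]; rfl
  rw [hmap]
  apply mem_DOiter
  · rw [List.pairwise_map]
    apply (Finset.nodup_toList s).pairwise_of_forall_ne
    intro u hu v hv huv
    obtain ⟨Su, hSu, hSu1, hSuF⟩ := hFspec u (Finset.mem_toList.mp hu)
    obtain ⟨Sv, hSv, hSv1, hSvF⟩ := hFspec v (Finset.mem_toList.mp hv)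
    have hne : Su ≠ Sv := fun e => huv (by rw [← hSu1, ← hSv1, e])
    rw [hSuF, hSvF]
    exact hM2 Su (hM'sub hSu) Sv (hM'sub hSv) hne
  · intro x hx
    obtain ⟨v, hv, rfl⟩ := List.mem_map.mp hx
    have hvs : v ∈ s := Finset.mem_toList.mp hv
    obtain ⟨Sv, hSv, hSv1, hSvF⟩ := hFspec v hvs
    obtain ⟨hsub, hcard⟩ := hM1 Sv (hM'sub hSv)
    constructor
    · -- all vertices of the star are on
      intro w hw
      simp only [hSvF] at hw
      obtain ⟨f, hf, hwf⟩ := Finset.mem_sup.mp hw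
      have hfG := hsub hf
      rw [Finset.mem_filter] at hfG
      have hfG2 := hfG.1
      simp only [hGdef, HpEdges, Finset.mem_filter] at hfG2
      exact hfG2.2 w hwf
    · -- certificate property
      intro ω' hω'
      show Nat.ceil r ≤ deg (HpEdges H ω') v
      have hsub' : Sv.2 ⊆ (HpEdges H ω').filter (fun f => v ∈ f) := by
        intro f hf
        have hfG := hsub hf
        rw [Finset.mem_filter] at hfG
        have hfH : f ∈ H := by
          have h5 := hfG.1
          simp only [hGdef, HpEdges, Finset.mem_filter] at h5
          exact h5.1
        rw [Finset.mem_filter]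
        refine ⟨?_, by rw [← hSv1]; exact hfG.2⟩
        simp only [HpEdges, Finset.mem_filter]
        refine ⟨hfH, fun w hwf => ?_⟩
        apply hω'
        simp only [hSvF]
        exact Finset.mem_sup.mpr ⟨f, hf, hwf⟩
      calc Nat.ceil r = Sv.2.card := hcard.symm
        _ ≤ _ := Finset.card_le_card hsub'
end Stars

lemma sqrt_pi_le_stirlingSeq {k : ℕ} (hk : 1 ≤ k) :
    Real.sqrt Real.pi ≤ Stirling.stirlingSeq k := by
  obtain ⟨j, rfl⟩ : ∃ j, k = j + 1 := ⟨k - 1, by omega⟩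
  have ha : Antitone (Stirling.stirlingSeq ∘ Nat.succ) := Stirling.stirlingSeq'_antitone
  have ht : Filter.Tendsto (Stirling.stirlingSeq ∘ Nat.succ) Filter.atTop
      (nhds (Real.sqrt Real.pi)) := by
    have := (Filter.tendsto_add_atTop_iff_nat 1).mpr Stirling.tendsto_stirlingSeq_sqrt_pi
    exact this
  exact ha.le_of_tendsto ht j

/-- Lemma 3.4: upper tail estimate for the largest `r`-star matching `M_r(H_p)`. -/
theorem statement11 (V : Type) [Fintype V] (H : Finset (Finset V))
    (p : ℝ) (hp0 : 0 ≤ p) (hp1 : p ≤ 1) (y r : ℝ) (hy : 0 < y) (hr : 0 < r) :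
    (perc V p {ω | y ≤ (Mr (HpEdges H ω) r : ℝ)}).toReal ≤
      (∑ v : V, (perc V p {ω | Nat.ceil r ≤ deg (HpEdges H ω) v}).toReal) ^ (Nat.ceil y) /
        (Nat.factorial (Nat.ceil y) : ℝ) ∧
    (∑ v : V, (perc V p {ω | Nat.ceil r ≤ deg (HpEdges H ω) v}).toReal) ^ (Nat.ceil y) /
        (Nat.factorial (Nat.ceil y) : ℝ) ≤
      (1 / Real.sqrt (2 * Real.pi * (Nat.ceil y : ℝ))) *
        (Real.exp 1 * (∑ v : V, (perc V p {ω | Nat.ceil r ≤ deg (HpEdges H ω) v}).toReal) /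
          (Nat.ceil y : ℝ)) ^ (Nat.ceil y) := by
  have hk1 : 1 ≤ Nat.ceil y := Nat.one_le_ceil_iff.mpr hy
  set k : ℕ := Nat.ceil y with hkdef
  set Φ : ℝ := ∑ v : V, (perc V p {ω | Nat.ceil r ≤ deg (HpEdges H ω) v}).toReal with hPhidef
  have hΦw : Φ = ∑ v : V, prW p (Av H r v) := by
    rw [hPhidef]
    exact Finset.sum_congr rfl fun v _ => perc_toReal V hp0 hp1 _
  have hΦ0 : 0 ≤ Φ := by
    rw [hPhidef]
    exact Finset.sum_nonneg fun v _ => ENNReal.toReal_nonneg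
  have hfacpos : (0:ℝ) < (Nat.factorial k : ℝ) := by positivity
  constructor
  · -- first inequality
    rw [perc_toReal V hp0 hp1]
    calc prW p {ω : V → Bool | y ≤ (Mr (HpEdges H ω) r : ℝ)}
        ≤ prW p (⋃ s ∈ (Finset.univ : Finset V).powersetCard k,
            DOiter (s.toList.map (Av H r))) :=
          prW_mono hp0 hp1 (event_subset_union H r y hr)
      _ ≤ ∑ s ∈ (Finset.univ : Finset V).powersetCard k,
            prW p (DOiter (s.toList.map (Av H r))) :=
          prW_biUnion_le hp0 hp1 _ _
      _ ≤ ∑ s ∈ (Finset.univ : Finset V).powersetCard k, ∏ v ∈ s, prW p (Av H r v) := by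
          apply Finset.sum_le_sum
          intro s _
          have hincr : ∀ A ∈ s.toList.map (Av H r), Incr A := by
            intro A hA
            obtain ⟨v, _, rfl⟩ := List.mem_map.mp hA
            exact Incr_Av H r v
          calc prW p (DOiter (s.toList.map (Av H r)))
              ≤ ((s.toList.map (Av H r)).map (prW p)).prod := prW_DOiter hp0 hp1 _ hincr
            _ = ∏ v ∈ s, prW p (Av H r v) := by
                rw [List.map_map]
                exact toList_map_prod s _
      _ ≤ Φ ^ k / (Nat.factorial k : ℝ) := by
          rw [le_div_iff₀ hfacpos]
          have hb := factorial_mul_sum_powersetCard_le Finset.univ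
            (fun v => prW p (Av H r v)) (fun v => prW_nonneg hp0 hp1 _) k
          rw [hΦw]
          linarith
  · -- second inequality
    have hkR : (1:ℝ) ≤ (k:ℝ) := by exact_mod_cast hk1
    have hkpos : (0:ℝ) < (k:ℝ) := by linarith
    have hden : (0:ℝ) < Real.sqrt (2*(k:ℝ)) * ((k:ℝ)/Real.exp 1)^k := by positivity
    have hstir := sqrt_pi_le_stirlingSeq hk1
    rw [Stirling.stirlingSeq, le_div_iff₀ hden] at hstir
    have hsqrt : Real.sqrt (2*Real.pi*(k:ℝ)) = Real.sqrt Real.pi * Real.sqrt (2*(k:ℝ)) := by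
      rw [show 2*Real.pi*(k:ℝ) = Real.pi * (2*(k:ℝ)) by ring, Real.sqrt_mul Real.pi_pos.le]
    have hfact : Real.sqrt (2*Real.pi*(k:ℝ)) * ((k:ℝ)/Real.exp 1)^k ≤ (Nat.factorial k : ℝ) := by
      rw [hsqrt]
      calc Real.sqrt Real.pi * Real.sqrt (2*(k:ℝ)) * ((k:ℝ)/Real.exp 1)^k
          = Real.sqrt Real.pi * (Real.sqrt (2*(k:ℝ)) * ((k:ℝ)/Real.exp 1)^k) := by ring
        _ ≤ (Nat.factorial k : ℝ) := hstir
    have hdenpos : (0:ℝ) < Real.sqrt (2*Real.pi*(k:ℝ)) * ((k:ℝ)/Real.exp 1)^k := by positivity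
    have hnum : (0:ℝ) ≤ Φ ^ k := pow_nonneg hΦ0 k
    calc Φ ^ k / (Nat.factorial k : ℝ)
        ≤ Φ ^ k / (Real.sqrt (2*Real.pi*(k:ℝ)) * ((k:ℝ)/Real.exp 1)^k) :=
          div_le_div_of_nonneg_left hnum hdenpos hfact
      _ = (1 / Real.sqrt (2 * Real.pi * (k : ℝ))) * (Real.exp 1 * Φ / (k:ℝ)) ^ k := by
          have h1 : Real.sqrt (2*Real.pi*(k:ℝ)) ≠ 0 := ne_of_gt (by positivity)
          have h2 : Real.exp 1 ≠ 0 := (Real.exp_pos 1).ne'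
          have h3 : ((k:ℝ)) ≠ 0 := ne_of_gt hkpos
          rw [div_pow, div_pow, mul_pow]
          field_simp


end UT
end
end

section
/- Given k ≥ 1, suppose H is a hypergraph all of whose edges have at most k vertices. Then for all β ∈ (0, 1/(32k)], r ≥ 1 and γ, t > 0, the event 𝒯(β, γ, r, t) implies X_r ≤ X ≤ X_r + t/2, where X = e(H_p) and X_r = max{e(G) : G ⊆ H_p, Δ₁(G) ≤ r}. -/
open MeasureTheory Real
open scoped ENNReal Classical

noncomputable section

namespace UT

section AuxProof

variable {V : Type} [Fintype V]

/-- The defining set for `Mr`. -/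
def MrSet (G : Finset (Finset V)) (ρ : ℝ) : Set ℕ :=
  { m : ℕ | ∃ M : Finset (V × Finset (Finset V)),
    (∀ S ∈ M, S.2 ⊆ G.filter (fun f => S.1 ∈ f) ∧ S.2.card = Nat.ceil ρ) ∧
    (∀ S ∈ M, ∀ T ∈ M, S ≠ T → Disjoint (starVtx S.2) (starVtx T.2)) ∧
    m = M.card }

lemma mr_eq (G : Finset (Finset V)) (ρ : ℝ) : Mr G ρ = sSup (MrSet G ρ) := rfl

lemma mrSet_bdd (G : Finset (Finset V)) (ρ : ℝ) : BddAbove (MrSet G ρ) := by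
  refine ⟨Fintype.card (V × Finset (Finset V)), ?_⟩
  rintro m ⟨M, -, -, rfl⟩
  exact Finset.card_le_univ M

lemma mrSet_nonempty (G : Finset (Finset V)) (ρ : ℝ) : (MrSet G ρ).Nonempty :=
  ⟨0, ∅, by simp, by simp, by simp⟩

lemma mr_spec (G : Finset (Finset V)) (ρ : ℝ) : Mr G ρ ∈ MrSet G ρ := by
  rw [mr_eq]; exact Nat.sSup_mem (mrSet_nonempty G ρ) (mrSet_bdd G ρ)

lemma mr_ub {G : Finset (Finset V)} {ρ : ℝ} {m : ℕ} (h : m ∈ MrSet G ρ) : m ≤ Mr G ρ :=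
  le_csSup (mrSet_bdd G ρ) h

lemma mr_mono {G G' : Finset (Finset V)} (h : G' ⊆ G) (ρ : ℝ) : Mr G' ρ ≤ Mr G ρ := by
  obtain ⟨M, h1, h2, hm⟩ := mr_spec G' ρ
  refine hm ▸ mr_ub ⟨M, fun S hS => ⟨(h1 S hS).1.trans
    (Finset.filter_subset_filter _ h), (h1 S hS).2⟩, h2, rfl⟩

/-- Star-extraction: removing all edges meeting the vertex set of a maximum disjoint family
of `ρ`-stars makes all degrees `< ⌈ρ⌉`, and the number of removed edges is controlled. -/
lemma extract (k : ℕ) (G : Finset (Finset V)) (hG : ∀ e ∈ G, e.card ≤ k)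
    (ρ : ℝ) (hρ : 1 ≤ ρ) :
    ∃ G', G' ⊆ G ∧ (∀ v, deg G' v < Nat.ceil ρ) ∧
      G.card ≤ G'.card + Mr G ρ * (k * Nat.ceil ρ) * maxDeg G := by
  classical
  obtain ⟨M, hM1, hM2, hMeq⟩ := mr_spec G ρ
  set U : Finset V := M.sup (fun S => starVtx S.2) with hUdef
  have hceilpos : 0 < Nat.ceil ρ := Nat.ceil_pos.mpr (by linarith)
  have hTU : ∀ T ∈ M, starVtx T.2 ⊆ U := fun T hT =>
    Finset.le_sup (f := fun S : V × Finset (Finset V) => starVtx S.2) hT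
  refine ⟨G.filter (fun e => Disjoint e U), Finset.filter_subset _ _, ?_, ?_⟩
  · intro v
    by_contra hcon
    push_neg at hcon
    simp only [deg, Finset.filter_filter] at hcon
    obtain ⟨W, hWsub, hWcard⟩ :=
      Finset.exists_subset_card_eq hcon
    have hWmem : ∀ f ∈ W, f ∈ G ∧ Disjoint f U ∧ v ∈ f := by
      intro f hf
      have := hWsub hf
      rw [Finset.mem_filter] at this
      exact ⟨this.1, this.2.1, this.2.2⟩
    have hvW : v ∈ starVtx W := by
      obtain ⟨f, hf⟩ := Finset.card_pos.mp (by rw [hWcard]; exact hceilpos)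
      exact Finset.mem_sup.mpr ⟨f, hf, (hWmem f hf).2.2⟩
    have hWU : Disjoint (starVtx W) U := by
      rw [Finset.disjoint_left]
      intro x hx hxU
      obtain ⟨f, hf, hxf⟩ := Finset.mem_sup.mp hx
      exact (Finset.disjoint_left.mp (hWmem f hf).2.1) hxf hxU
    have hnot : (v, W) ∉ M := by
      intro hmem
      exact (Finset.disjoint_left.mp hWU) hvW (hTU _ hmem hvW)
    have hins : (insert (v, W) M).card ∈ MrSet G ρ := by
      refine ⟨insert (v, W) M, ?_, ?_, rfl⟩
      · intro S hS
        rcases Finset.mem_insert.mp hS with h | h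
        · subst h
          exact ⟨fun f hf => Finset.mem_filter.mpr ⟨(hWmem f hf).1, (hWmem f hf).2.2⟩, hWcard⟩
        · exact hM1 S h
      · intro S hS T hT hne
        rcases Finset.mem_insert.mp hS with h | h <;> rcases Finset.mem_insert.mp hT with h' | h'
        · exact absurd (h.trans h'.symm) hne
        · subst h; exact Finset.disjoint_of_subset_right (hTU T h') hWU
        · subst h'; exact (Finset.disjoint_of_subset_right (hTU S h) hWU).symm
        · exact hM2 S h T h' hne
    have hle := mr_ub hins
    rw [Finset.card_insert_of_notMem hnot] at hle
    omega
  · have hsplit := Finset.card_filter_add_card_filter_not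
      (s := G) (p := fun e => Disjoint e U)
    have hremsub : G.filter (fun e => ¬ Disjoint e U)
        ⊆ U.biUnion (fun u => G.filter (fun e => u ∈ e)) := by
      intro e he
      rw [Finset.mem_filter] at he
      obtain ⟨u, hue, huU⟩ := Finset.not_disjoint_iff.mp he.2
      exact Finset.mem_biUnion.mpr ⟨u, huU, Finset.mem_filter.mpr ⟨he.1, hue⟩⟩
    have hrem1 : (G.filter (fun e => ¬ Disjoint e U)).card
        ≤ ∑ u ∈ U, (G.filter (fun e => u ∈ e)).card :=
      (Finset.card_le_card hremsub).trans Finset.card_biUnion_le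
    have hrem2 : ∑ u ∈ U, (G.filter (fun e => u ∈ e)).card ≤ U.card * maxDeg G := by
      calc ∑ u ∈ U, (G.filter (fun e => u ∈ e)).card
          ≤ U.card • maxDeg G := Finset.sum_le_card_nsmul _ _ _
            (fun u _ => Finset.le_sup (f := deg G) (Finset.mem_univ u))
        _ = U.card * maxDeg G := by rw [smul_eq_mul]
    have hper : ∀ S ∈ M, (starVtx S.2).card ≤ k * Nat.ceil ρ := by
      intro S hS
      have h1 : starVtx S.2 = S.2.biUnion id := by
        rw [starVtx, Finset.sup_eq_biUnion]
      rw [h1]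
      calc (S.2.biUnion id).card ≤ ∑ f ∈ S.2, (id f).card := Finset.card_biUnion_le
        _ ≤ ∑ _f ∈ S.2, k := Finset.sum_le_sum
            (fun f hf => hG f (Finset.mem_filter.mp ((hM1 S hS).1 hf)).1)
        _ = S.2.card * k := by rw [Finset.sum_const, smul_eq_mul]
        _ = k * Nat.ceil ρ := by rw [(hM1 S hS).2, Nat.mul_comm]
    have hUb : U.card ≤ M.card * (k * Nat.ceil ρ) := by
      calc U.card ≤ ∑ S ∈ M, (starVtx S.2).card := by
            rw [hUdef, Finset.sup_eq_biUnion]; exact Finset.card_biUnion_le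
        _ ≤ ∑ _S ∈ M, (k * Nat.ceil ρ) := Finset.sum_le_sum hper
        _ = M.card * (k * Nat.ceil ρ) := by rw [Finset.sum_const, smul_eq_mul]
    calc G.card = (G.filter (fun e => Disjoint e U)).card
          + (G.filter (fun e => ¬ Disjoint e U)).card := hsplit.symm
      _ ≤ (G.filter (fun e => Disjoint e U)).card + U.card * maxDeg G :=
          Nat.add_le_add_left (hrem1.trans hrem2) _
      _ ≤ (G.filter (fun e => Disjoint e U)).card + (M.card * (k * Nat.ceil ρ)) * maxDeg G :=
          Nat.add_le_add_left (Nat.mul_le_mul_right _ hUb) _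
      _ = (G.filter (fun e => Disjoint e U)).card + Mr G ρ * (k * Nat.ceil ρ) * maxDeg G := by
          rw [hMeq]

/-- Iterated star-extraction over dyadic degree levels. -/
lemma levels (k : ℕ) (r : ℝ) (hr : 1 ≤ r) :
    ∀ n (G : Finset (Finset V)), (∀ e ∈ G, e.card ≤ k) →
      (∀ v, deg G v < Nat.ceil ((2:ℝ)^n * r)) →
      ∃ G', G' ⊆ G ∧ (∀ v, deg G' v < Nat.ceil r) ∧
        (G.card : ℝ) ≤ (G'.card : ℝ) +
          ∑ j ∈ Finset.range n, 4 * (k:ℝ) * ((2:ℝ)^j * r)^2 * (Mr G ((2:ℝ)^j * r) : ℝ) := by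
  intro n
  induction n with
  | zero =>
    intro G hG hdeg
    refine ⟨G, Finset.Subset.refl G, ?_, by simp⟩
    intro v
    have := hdeg v
    simpa using this
  | succ n ih =>
    intro G hG hdeg
    have hrpos : (0:ℝ) < r := by linarith
    have h2n : (1:ℝ) ≤ (2:ℝ)^n := by
      have := Nat.one_le_two_pow (n := n)
      exact_mod_cast this
    have hρ1 : (1:ℝ) ≤ (2:ℝ)^n * r := by nlinarith
    obtain ⟨G₁, hsub1, hdeg1, hcard1⟩ := extract k G hG ((2:ℝ)^n * r) hρ1
    obtain ⟨G', hsub2, hdeg2, hcard2⟩ := ih G₁ (fun e he => hG e (hsub1 he)) hdeg1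
    refine ⟨G', hsub2.trans hsub1, hdeg2, ?_⟩
    have hceil2 : ((Nat.ceil ((2:ℝ)^n * r) : ℕ) : ℝ) ≤ 2 * ((2:ℝ)^n * r) := by
      have := Nat.ceil_lt_add_one (show (0:ℝ) ≤ (2:ℝ)^n * r by linarith)
      linarith
    have hmax : ((maxDeg G : ℕ) : ℝ) ≤ 2 * ((2:ℝ)^n * r) := by
      have hpos : (0:ℕ) < Nat.ceil ((2:ℝ)^(n+1) * r) := by
        apply Nat.ceil_pos.mpr
        have : (0:ℝ) < (2:ℝ)^(n+1) := by positivity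
        nlinarith
      have hlt : maxDeg G < Nat.ceil ((2:ℝ)^(n+1) * r) := by
        rw [maxDeg]
        exact (Finset.sup_lt_iff hpos).mpr (fun v _ => hdeg v)
      have h1 : ((maxDeg G : ℕ):ℝ) + 1 ≤ ((Nat.ceil ((2:ℝ)^(n+1) * r) : ℕ) : ℝ) := by
        exact_mod_cast hlt
      have h2 : ((Nat.ceil ((2:ℝ)^(n+1) * r) : ℕ):ℝ) < (2:ℝ)^(n+1) * r + 1 :=
        Nat.ceil_lt_add_one (by nlinarith [pow_pos (show (0:ℝ) < 2 by norm_num) (n+1)])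
      have h3 : (2:ℝ)^(n+1) = 2 * (2:ℝ)^n := by rw [pow_succ]; ring
      nlinarith
    have hcast : (G.card : ℝ) ≤ (G₁.card : ℝ) + (Mr G ((2:ℝ)^n * r) : ℝ)
        * ((k:ℝ) * ((Nat.ceil ((2:ℝ)^n * r) : ℕ) : ℝ)) * ((maxDeg G : ℕ) : ℝ) := by
      exact_mod_cast hcard1
    have hstep : (G.card:ℝ) ≤ (G₁.card:ℝ)
        + 4 * (k:ℝ) * ((2:ℝ)^n * r)^2 * (Mr G ((2:ℝ)^n * r) : ℝ) := by
      have hM0 : (0:ℝ) ≤ (Mr G ((2:ℝ)^n * r) : ℝ) := Nat.cast_nonneg _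
      have hk0 : (0:ℝ) ≤ (k:ℝ) := Nat.cast_nonneg _
      have hc0 : (0:ℝ) ≤ ((Nat.ceil ((2:ℝ)^n * r) : ℕ) : ℝ) := Nat.cast_nonneg _
      have hd0 : (0:ℝ) ≤ ((maxDeg G : ℕ) : ℝ) := Nat.cast_nonneg _
      have step1 : ((Nat.ceil ((2:ℝ)^n * r) : ℕ) : ℝ) * ((maxDeg G : ℕ) : ℝ)
          ≤ (2 * ((2:ℝ)^n * r)) * (2 * ((2:ℝ)^n * r)) :=
        mul_le_mul hceil2 hmax hd0 (le_trans hc0 hceil2)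
      have key : (Mr G ((2:ℝ)^n * r) : ℝ)
          * ((k:ℝ) * ((Nat.ceil ((2:ℝ)^n * r) : ℕ) : ℝ)) * ((maxDeg G : ℕ) : ℝ)
          ≤ 4 * (k:ℝ) * ((2:ℝ)^n * r)^2 * (Mr G ((2:ℝ)^n * r) : ℝ) := by
        calc (Mr G ((2:ℝ)^n * r) : ℝ)
            * ((k:ℝ) * ((Nat.ceil ((2:ℝ)^n * r) : ℕ) : ℝ)) * ((maxDeg G : ℕ) : ℝ)
            = ((Mr G ((2:ℝ)^n * r) : ℝ) * (k:ℝ))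
              * (((Nat.ceil ((2:ℝ)^n * r) : ℕ) : ℝ) * ((maxDeg G : ℕ) : ℝ)) := by ring
          _ ≤ ((Mr G ((2:ℝ)^n * r) : ℝ) * (k:ℝ))
              * ((2 * ((2:ℝ)^n * r)) * (2 * ((2:ℝ)^n * r))) :=
            mul_le_mul_of_nonneg_left step1 (mul_nonneg hM0 hk0)
          _ = 4 * (k:ℝ) * ((2:ℝ)^n * r)^2 * (Mr G ((2:ℝ)^n * r) : ℝ) := by ring
      linarith
    have hmono : ∑ j ∈ Finset.range n, 4 * (k:ℝ) * ((2:ℝ)^j * r)^2 * (Mr G₁ ((2:ℝ)^j * r) : ℝ)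
        ≤ ∑ j ∈ Finset.range n, 4 * (k:ℝ) * ((2:ℝ)^j * r)^2 * (Mr G ((2:ℝ)^j * r) : ℝ) := by
      apply Finset.sum_le_sum
      intro j _
      have h := mr_mono hsub1 ((2:ℝ)^j * r)
      have hc : ((Mr G₁ ((2:ℝ)^j * r) : ℕ) : ℝ) ≤ ((Mr G ((2:ℝ)^j * r) : ℕ) : ℝ) := by
        exact_mod_cast h
      have h0 : (0:ℝ) ≤ 4 * (k:ℝ) * ((2:ℝ)^j * r)^2 := by positivity
      exact mul_le_mul_of_nonneg_left hc h0
    rw [Finset.sum_range_succ]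
    linarith

/-- A finite sum of `2^j * a` over indices where each term is `< c` is at most `2c`. -/
lemma geom_bound (S : Finset ℕ) (a c : ℝ) (ha : 0 ≤ a) (hc : 0 ≤ c)
    (h : ∀ j ∈ S, (2:ℝ)^j * a < c) : ∑ j ∈ S, (2:ℝ)^j * a ≤ 2 * c := by
  rcases S.eq_empty_or_nonempty with rfl | hne
  · simp; linarith
  · have hm := S.max'_mem hne
    have hsub : S ⊆ Finset.range (S.max' hne + 1) := fun j hj =>
      Finset.mem_range.mpr (Nat.lt_succ_of_le (S.le_max' j hj))
    have h1 : ∑ j ∈ S, (2:ℝ)^j * a ≤ ∑ j ∈ Finset.range (S.max' hne + 1), (2:ℝ)^j * a :=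
      Finset.sum_le_sum_of_subset_of_nonneg hsub (fun j _ _ => by positivity)
    have h2 : ∑ j ∈ Finset.range (S.max' hne + 1), (2:ℝ)^j * a
        = ((2:ℝ)^(S.max' hne + 1) - 1) * a := by
      rw [← Finset.sum_mul, geom_sum_eq (by norm_num : (2:ℝ) ≠ 1)]
      norm_num
    have h3 := h _ hm
    have h4 : (0:ℝ) < (2:ℝ)^(S.max' hne) := by positivity
    have h5 : (2:ℝ)^(S.max' hne + 1) = 2 * (2:ℝ)^(S.max' hne) := by rw [pow_succ]; ring
    calc ∑ j ∈ S, (2:ℝ)^j * a ≤ ((2:ℝ)^(S.max' hne + 1) - 1) * a := by rw [← h2]; exact h1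
      _ ≤ 2 * c := by nlinarith

end AuxProof

set_option maxHeartbeats 2000000 in
/-- Lemma 3.6: on the event `𝒯(β,γ,r,t)` we have `X_r ≤ X ≤ X_r + t/2`. -/
theorem statement13 (k : ℕ) (hk : 1 ≤ k) (V : Type) [Fintype V] (H : Finset (Finset V))
    (hH : ∀ e ∈ H, e.card ≤ k) (p : ℝ) (hp0 : 0 ≤ p) (hp1 : p ≤ 1)
    (β : ℝ) (hβ0 : 0 < β) (hβ1 : β ≤ 1/(32 * (k:ℝ)))
    (r : ℝ) (hr : 1 ≤ r) (γ t : ℝ) (hγ : 0 < γ) (ht : 0 < t)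
    (ω : V → Bool) (hT : eventT H p β γ r t ω) :
    Xr H r ω ≤ XE H ω ∧ XE H ω ≤ Xr H r ω + t/2 := by
  classical
  have hrpos : (0:ℝ) < r := by linarith
  have hρpos : ∀ j : ℕ, (0:ℝ) < (2:ℝ)^j * r := fun j =>
    mul_pos (pow_pos (by norm_num) j) hrpos
  have hst : (0:ℝ) < Real.sqrt t := Real.sqrt_pos.mpr ht
  have hts : Real.sqrt t * Real.sqrt t = t := Real.mul_self_sqrt ht.le
  have hk1 : (1:ℝ) ≤ (k:ℝ) := by exact_mod_cast hk
  have h8 : 4 * (k:ℝ) * β ≤ 1/8 := by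
    have h32 : (0:ℝ) < 32 * (k:ℝ) := by linarith
    have := (le_div_iff₀ h32).mp hβ1
    nlinarith
  have hβ32 : β ≤ 1/32 := by nlinarith
  -- upper bounds and nonemptiness for the `Xr` sup
  have hub : ∀ z ∈ {z : ℝ | ∃ G : Finset (Finset V), G ⊆ HpEdges H ω ∧
      (∀ v : V, (deg G v : ℝ) ≤ r) ∧ z = (G.card : ℝ)}, z ≤ ((HpEdges H ω).card : ℝ) := by
    rintro z ⟨G, hG, -, rfl⟩
    exact_mod_cast Finset.card_le_card hG
  have hne : {z : ℝ | ∃ G : Finset (Finset V), G ⊆ HpEdges H ω ∧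
      (∀ v : V, (deg G v : ℝ) ≤ r) ∧ z = (G.card : ℝ)}.Nonempty := by
    refine ⟨0, ∅, Finset.empty_subset _, fun v => ?_, by simp⟩
    simp only [deg, Finset.filter_empty, Finset.card_empty, Nat.cast_zero]
    linarith
  have hXrle : Xr H r ω ≤ XE H ω := csSup_le hne hub
  refine ⟨hXrle, ?_⟩
  -- apply the deterministic degree-reduction lemma
  have hFH : HpEdges H ω ⊆ H := by
    intro e he
    simp only [HpEdges, Finset.mem_filter] at he
    exact he.1
  have hdegF : ∀ v, deg (HpEdges H ω) v < Nat.ceil ((2:ℝ)^(H.card) * r) := by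
    intro v
    have h1 : deg (HpEdges H ω) v ≤ (HpEdges H ω).card :=
      Finset.card_le_card (fun f hf => Finset.mem_of_mem_filter f hf)
    have h2 : (HpEdges H ω).card ≤ H.card := Finset.card_le_card hFH
    have h3 : (H.card : ℝ) < (2:ℝ)^(H.card) * r := by
      have hnlt : H.card < 2 ^ H.card := Nat.lt_two_pow_self
      have h4 : (H.card : ℝ) < (2:ℝ)^(H.card) := by exact_mod_cast hnlt
      nlinarith [pow_pos (show (0:ℝ) < 2 by norm_num) H.card]
    have h5 : H.card < Nat.ceil ((2:ℝ)^(H.card) * r) := by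
      have h6 := Nat.le_ceil ((2:ℝ)^(H.card) * r)
      exact_mod_cast h3.trans_le h6
    omega
  obtain ⟨G', hsub, hdeg', hcard⟩ :=
    levels k r hr H.card (HpEdges H ω) (fun e he => hH e (hFH he)) hdegF
  have hG'r : ∀ v : V, (deg G' v : ℝ) ≤ r := by
    intro v
    have h1 := hdeg' v
    have h2 : ((Nat.ceil r : ℕ) : ℝ) < r + 1 := Nat.ceil_lt_add_one (by linarith)
    have h3 : ((deg G' v : ℕ) : ℝ) + 1 ≤ ((Nat.ceil r : ℕ) : ℝ) := by exact_mod_cast h1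
    linarith
  have hle : (G'.card : ℝ) ≤ Xr H r ω :=
    le_csSup ⟨((HpEdges H ω).card : ℝ), fun z hz => hub z hz⟩ ⟨G', hsub, hG'r, rfl⟩
  -- bound the error sum using the event 𝒯
  have hsum : ∑ j ∈ Finset.range H.card,
      4 * (k:ℝ) * ((2:ℝ)^j * r)^2 * (Mr (HpEdges H ω) ((2:ℝ)^j * r) : ℝ) ≤ t/2 := by
    rw [← Finset.sum_filter_add_sum_filter_not (Finset.range H.card)
      (fun j => (2:ℝ)^j * r < Real.sqrt t / sP p γ)]
    have hA : ∑ j ∈ (Finset.range H.card).filter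
        (fun j => (2:ℝ)^j * r < Real.sqrt t / sP p γ),
        4 * (k:ℝ) * ((2:ℝ)^j * r)^2 * (Mr (HpEdges H ω) ((2:ℝ)^j * r) : ℝ) ≤ t/4 := by
      rcases Finset.eq_empty_or_nonempty ((Finset.range H.card).filter
          (fun j => (2:ℝ)^j * r < Real.sqrt t / sP p γ)) with he | ⟨j₀, hj₀⟩
      · rw [he, Finset.sum_empty]; linarith
      · have hs : (0:ℝ) < sP p γ := by
          have hc := (Finset.mem_filter.mp hj₀).2
          by_contra hns
          push_neg at hns
          have : Real.sqrt t / sP p γ ≤ 0 := div_nonpos_of_nonneg_of_nonpos hst.le hns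
          linarith [hρpos j₀]
        have hsts : (0:ℝ) ≤ Real.sqrt t * sP p γ := mul_nonneg hst.le hs.le
        have hbd : ∀ j ∈ (Finset.range H.card).filter
            (fun j => (2:ℝ)^j * r < Real.sqrt t / sP p γ),
            4 * (k:ℝ) * ((2:ℝ)^j * r)^2 * (Mr (HpEdges H ω) ((2:ℝ)^j * r) : ℝ)
              ≤ (1/8) * (Real.sqrt t * sP p γ) * ((2:ℝ)^j * r) := by
          intro j hj
          have hc := (Finset.mem_filter.mp hj).2
          have hmr := hT.1 j hc
          have hmρ : (Mr (HpEdges H ω) ((2:ℝ)^j * r) : ℝ) * ((2:ℝ)^j * r)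
              < β * Real.sqrt t * sP p γ := (lt_div_iff₀ (hρpos j)).mp hmr
          have h4kρ : (0:ℝ) ≤ 4 * (k:ℝ) * ((2:ℝ)^j * r) := by
            have := (hρpos j).le
            nlinarith
          calc 4 * (k:ℝ) * ((2:ℝ)^j * r)^2 * (Mr (HpEdges H ω) ((2:ℝ)^j * r) : ℝ)
              = (4 * (k:ℝ) * ((2:ℝ)^j * r))
                * ((Mr (HpEdges H ω) ((2:ℝ)^j * r) : ℝ) * ((2:ℝ)^j * r)) := by ring
            _ ≤ (4 * (k:ℝ) * ((2:ℝ)^j * r)) * (β * Real.sqrt t * sP p γ) :=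
                mul_le_mul_of_nonneg_left hmρ.le h4kρ
            _ = (4 * (k:ℝ) * β) * (Real.sqrt t * sP p γ) * ((2:ℝ)^j * r) := by ring
            _ ≤ (1/8) * (Real.sqrt t * sP p γ) * ((2:ℝ)^j * r) := by
                apply mul_le_mul_of_nonneg_right _ (hρpos j).le
                exact mul_le_mul_of_nonneg_right h8 hsts
        have hgeo : ∑ j ∈ (Finset.range H.card).filter
            (fun j => (2:ℝ)^j * r < Real.sqrt t / sP p γ), (2:ℝ)^j * r
            ≤ 2 * (Real.sqrt t / sP p γ) :=
          geom_bound _ r _ hrpos.le (div_nonneg hst.le hs.le)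
            (fun j hj => (Finset.mem_filter.mp hj).2)
        have hs8 : (0:ℝ) ≤ (1/8) * (Real.sqrt t * sP p γ) := mul_nonneg (by norm_num) hsts
        have h1 := Finset.sum_le_sum hbd
        have h2 : ∑ j ∈ (Finset.range H.card).filter
            (fun j => (2:ℝ)^j * r < Real.sqrt t / sP p γ),
            (1/8) * (Real.sqrt t * sP p γ) * ((2:ℝ)^j * r)
            = (1/8) * (Real.sqrt t * sP p γ) * ∑ j ∈ (Finset.range H.card).filter
            (fun j => (2:ℝ)^j * r < Real.sqrt t / sP p γ), ((2:ℝ)^j * r) := by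
          rw [Finset.mul_sum]
        have h4 := mul_le_mul_of_nonneg_left hgeo hs8
        have h5 : (1/8) * (Real.sqrt t * sP p γ) * (2 * (Real.sqrt t / sP p γ)) = t/4 := by
          rw [div_eq_mul_inv]
          calc (1/8) * (Real.sqrt t * sP p γ) * (2 * (Real.sqrt t * (sP p γ)⁻¹))
              = (1/4) * (Real.sqrt t * Real.sqrt t) * (sP p γ * (sP p γ)⁻¹) := by ring
            _ = t/4 := by rw [hts, mul_inv_cancel₀ (ne_of_gt hs)]; ring
        linarith
    have hB : ∑ j ∈ (Finset.range H.card).filter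
        (fun j => ¬((2:ℝ)^j * r < Real.sqrt t / sP p γ)),
        4 * (k:ℝ) * ((2:ℝ)^j * r)^2 * (Mr (HpEdges H ω) ((2:ℝ)^j * r) : ℝ) ≤ t/4 := by
      have hbd : ∀ j ∈ (Finset.range H.card).filter
          (fun j => ¬((2:ℝ)^j * r < Real.sqrt t / sP p γ)),
          4 * (k:ℝ) * ((2:ℝ)^j * r)^2 * (Mr (HpEdges H ω) ((2:ℝ)^j * r) : ℝ)
            ≤ if Mr (HpEdges H ω) ((2:ℝ)^j * r) ≠ 0
              then (1/8) * Real.sqrt t * ((2:ℝ)^j * r) else 0 := by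
        intro j hj
        by_cases hz : Mr (HpEdges H ω) ((2:ℝ)^j * r) = 0
        · simp [hz]
        · rw [if_pos hz]
          have hc := not_lt.mp (Finset.mem_filter.mp hj).2
          have hmr := hT.2 j hc
          have hmρ : (Mr (HpEdges H ω) ((2:ℝ)^j * r) : ℝ) * ((2:ℝ)^j * r)
              < β * Real.sqrt t := (lt_div_iff₀ (hρpos j)).mp hmr
          have h4kρ : (0:ℝ) ≤ 4 * (k:ℝ) * ((2:ℝ)^j * r) := by
            have := (hρpos j).le
            nlinarith
          calc 4 * (k:ℝ) * ((2:ℝ)^j * r)^2 * (Mr (HpEdges H ω) ((2:ℝ)^j * r) : ℝ)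
              = (4 * (k:ℝ) * ((2:ℝ)^j * r))
                * ((Mr (HpEdges H ω) ((2:ℝ)^j * r) : ℝ) * ((2:ℝ)^j * r)) := by ring
            _ ≤ (4 * (k:ℝ) * ((2:ℝ)^j * r)) * (β * Real.sqrt t) :=
                mul_le_mul_of_nonneg_left hmρ.le h4kρ
            _ = (4 * (k:ℝ) * β) * Real.sqrt t * ((2:ℝ)^j * r) := by ring
            _ ≤ (1/8) * Real.sqrt t * ((2:ℝ)^j * r) := by
                apply mul_le_mul_of_nonneg_right _ (hρpos j).le
                exact mul_le_mul_of_nonneg_right h8 (Real.sqrt_nonneg t)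
      have hgeo : ∑ j ∈ ((Finset.range H.card).filter
          (fun j => ¬((2:ℝ)^j * r < Real.sqrt t / sP p γ))).filter
          (fun j => Mr (HpEdges H ω) ((2:ℝ)^j * r) ≠ 0), (2:ℝ)^j * r
          ≤ 2 * (β * Real.sqrt t) := by
        apply geom_bound _ r _ hrpos.le (mul_nonneg hβ0.le hst.le)
        intro j hj
        have hj2 := Finset.mem_filter.mp hj
        have hz := hj2.2
        have hc := not_lt.mp (Finset.mem_filter.mp hj2.1).2
        have hmr := hT.2 j hc
        have hmρ : (Mr (HpEdges H ω) ((2:ℝ)^j * r) : ℝ) * ((2:ℝ)^j * r)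
            < β * Real.sqrt t := (lt_div_iff₀ (hρpos j)).mp hmr
        have hm1 : (1:ℝ) ≤ (Mr (HpEdges H ω) ((2:ℝ)^j * r) : ℝ) := by
          exact_mod_cast Nat.one_le_iff_ne_zero.mpr hz
        nlinarith [hρpos j]
      have hs8 : (0:ℝ) ≤ (1/8) * Real.sqrt t := mul_nonneg (by norm_num) (Real.sqrt_nonneg t)
      have h1 := Finset.sum_le_sum hbd
      have h2 : ∑ j ∈ (Finset.range H.card).filter
          (fun j => ¬((2:ℝ)^j * r < Real.sqrt t / sP p γ)),
          (if Mr (HpEdges H ω) ((2:ℝ)^j * r) ≠ 0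
            then (1/8) * Real.sqrt t * ((2:ℝ)^j * r) else 0)
          = ∑ j ∈ ((Finset.range H.card).filter
          (fun j => ¬((2:ℝ)^j * r < Real.sqrt t / sP p γ))).filter
          (fun j => Mr (HpEdges H ω) ((2:ℝ)^j * r) ≠ 0),
          (1/8) * Real.sqrt t * ((2:ℝ)^j * r) := (Finset.sum_filter _ _).symm
      have h3 : ∑ j ∈ ((Finset.range H.card).filter
          (fun j => ¬((2:ℝ)^j * r < Real.sqrt t / sP p γ))).filter
          (fun j => Mr (HpEdges H ω) ((2:ℝ)^j * r) ≠ 0),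
          (1/8) * Real.sqrt t * ((2:ℝ)^j * r)
          = (1/8) * Real.sqrt t * ∑ j ∈ ((Finset.range H.card).filter
          (fun j => ¬((2:ℝ)^j * r < Real.sqrt t / sP p γ))).filter
          (fun j => Mr (HpEdges H ω) ((2:ℝ)^j * r) ≠ 0), ((2:ℝ)^j * r) := by
        rw [Finset.mul_sum]
      have h4 := mul_le_mul_of_nonneg_left hgeo hs8
      have h5 : (1/8) * Real.sqrt t * (2 * (β * Real.sqrt t)) ≤ t/4 := by nlinarith
      linarith
    linarith
  have hXE : XE H ω = ((HpEdges H ω).card : ℝ) := rfl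
  rw [hXE]
  linarith


end UT
end
end

section
/- Given any hypergraph H, set X = e(H_p) and μ = E X. For all D ≥ 1, p ∈ (0,1] and t ≥ 0 such that property 𝔛(H, D, μ+t) holds and μ + t ≥ 1, one has Pr(X ≥ μ + t) ≥ exp(−D·√(μ+t)·log(1/p)). -/
open MeasureTheory Real
open scoped ENNReal Classical

noncomputable section

namespace UT

lemma perc_cylinder {V : Type} [Fintype V] (p : ℝ) (hp0 : 0 ≤ p) (hp1 : p ≤ 1)
    (W : Finset V) :
    perc V p {ω | ∀ v ∈ W, ω v = true} = ENNReal.ofReal p ^ W.card := by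
  have hset : {ω : V → Bool | ∀ v ∈ W, ω v = true}
      = Set.pi Set.univ (fun v => if v ∈ W then {true} else Set.univ) := by
    ext ω
    simp only [Set.mem_setOf_eq, Set.mem_pi, Set.mem_univ, forall_true_left]
    constructor
    · intro h v
      by_cases hv : v ∈ W <;> simp [hv, h v]
    · intro h v hv
      have := h v
      simpa [hv] using this
  have hbern_true : bern p {true} = ENNReal.ofReal p := by
    have hmin : min (Real.toNNReal p) 1 = Real.toNNReal p := by
      rw [min_eq_left]
      exact Real.toNNReal_le_one.mpr hp1
    rw [bern, PMF.toMeasure_apply_singleton _ _ (measurableSet_singleton _)]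
    simp [PMF.bernoulli, hmin]
    rfl
  rw [perc, hset, MeasureTheory.Measure.pi_pi]
  have : ∀ v : V, bern p (if v ∈ W then ({true} : Set Bool) else Set.univ)
      = if v ∈ W then ENNReal.ofReal p else 1 := by
    intro v; by_cases hv : v ∈ W
    · simp [hv, hbern_true]
    · simp only [hv, if_neg, if_false]
      exact measure_univ
  rw [Finset.prod_congr rfl (fun v _ => this v)]
  rw [Finset.prod_ite_mem, Finset.univ_inter, Finset.prod_const]

/-- Theorem 4.1: lower bound via clustered configurations. -/
theorem statement15 (V : Type) [Fintype V] (H : Finset (Finset V)) (D : ℝ) (hD : 1 ≤ D)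
    (p : ℝ) (hp0 : 0 < p) (hp1 : p ≤ 1) (t : ℝ) (ht : 0 ≤ t)
    (hX : propX H D (mu H p + t)) (h1 : 1 ≤ mu H p + t) :
    Real.exp (-(D * Real.sqrt (mu H p + t) * Real.log (1/p))) ≤ pr H p (mu H p + t) := by
  set c : ℝ := mu H p + t with hc
  obtain ⟨W, hWcard, hWedges⟩ := hX
  have hsqrt1 : (1:ℝ) ≤ Real.sqrt c := by
    rw [show (1:ℝ) = Real.sqrt 1 by simp]
    exact Real.sqrt_le_sqrt h1
  have hmax : max (Real.sqrt c) 1 = Real.sqrt c := max_eq_left hsqrt1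
  rw [hmax] at hWcard
  -- event inclusion
  have hsub : {ω : V → Bool | ∀ v ∈ W, ω v = true} ⊆ {ω | c ≤ XE H ω} := by
    intro ω hω
    have hsubF : H.filter (fun e => e ⊆ W) ⊆ HpEdges H ω := by
      intro e he
      rw [Finset.mem_filter] at he
      simp only [HpEdges, Finset.mem_filter]
      exact ⟨he.1, fun v hv => hω v (he.2 hv)⟩
    have := Finset.card_le_card hsubF
    simp only [Set.mem_setOf_eq, XE]
    calc c ≤ ((H.filter fun e => e ⊆ W).card : ℝ) := hWedges
      _ ≤ ((HpEdges H ω).card : ℝ) := by exact_mod_cast this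
  have hmono : perc V p {ω | ∀ v ∈ W, ω v = true} ≤ perc V p {ω | c ≤ XE H ω} :=
    measure_mono hsub
  have hpi : IsProbabilityMeasure (perc V p) := by
    rw [perc]; infer_instance
  have hcyl := perc_cylinder p hp0.le hp1 W
  have htoReal : p ^ W.card ≤ pr H p c := by
    rw [pr]
    have h1' : (perc V p {ω | ∀ v ∈ W, ω v = true}).toReal
        ≤ (perc V p {ω | c ≤ XE H ω}).toReal :=
      ENNReal.toReal_mono (measure_ne_top _ _) hmono
    have h2' : (perc V p {ω | ∀ v ∈ W, ω v = true}).toReal = p ^ W.card := by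
      rw [hcyl, ENNReal.toReal_pow, ENNReal.toReal_ofReal hp0.le]
    linarith
  -- exp bound
  have hcpos : (0:ℝ) < c := lt_of_lt_of_le one_pos h1
  have hexp : Real.exp (-(D * Real.sqrt c * Real.log (1/p)))
      = p ^ (D * Real.sqrt c) := by
    rw [Real.rpow_def_of_pos hp0]
    congr 1
    rw [Real.log_div one_ne_zero (ne_of_gt hp0), Real.log_one]
    ring
  have hrpow : p ^ (D * Real.sqrt c) ≤ p ^ (W.card : ℝ) :=
    Real.rpow_le_rpow_of_exponent_ge hp0 hp1 hWcard
  have : p ^ (W.card : ℝ) = p ^ W.card := Real.rpow_natCast p W.card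
  rw [hexp]
  calc p ^ (D * Real.sqrt c) ≤ p ^ (W.card : ℝ) := hrpow
    _ = p ^ W.card := this
    _ ≤ pr H p c := htoReal


end UT
end
end
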